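/- arXiv:1107.3882 — 6 statements merged into one kernel-verified Lean document; each statement's English description precedes it below -/
import Mathlib

section
/- For any n ∈ ℕ, n ≥ 1, and any positive integers i₁, j₁, …, iₙ, jₙ with N := i₁ + j₁ + ⋯ + iₙ + jₙ, one has Ω'(i₁, j₁, …, iₙ, jₙ) = (1/(N+1)) · Σ_{k=0}^{n} Ω'(i₁, j₁, …, i_k, j_k − 1) · Ω'(i_{k+1} − 1, j_{k+1}, …, iₙ, jₙ), where for k = 0 the first factor is Ω' with an empty list of arguments (equal to 1) and the second factor is Ω'(i₁ − 1, j₁, i₂, j₂, …, iₙ, jₙ), and for k = n the second factor is Ω' with an empty list of arguments (equal to 1). -/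
/-- The monotonicity condition: for the list of block lengths `a`, a permutation `τ` of
`{0, …, a.sum}` must increase on the `k`-th block for even `k` (0-indexed, i.e. odd blocks
in 1-indexed counting) and decrease on the `k`-th block for odd `k`. -/
def MonotCond (a : List ℕ) (τ : Equiv.Perm (Fin (a.sum + 1))) : Prop :=
  ∀ k, k < a.length →
    ∀ j, (a.take k).sum ≤ j → j < (a.take (k + 1)).sum →
      ∀ h : j + 1 < a.sum + 1,
        if k % 2 = 0
        then τ ⟨j, Nat.lt_of_succ_lt h⟩ < τ ⟨j + 1, h⟩
        else τ ⟨j + 1, h⟩ < τ ⟨j, Nat.lt_of_succ_lt h⟩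

/-- `Omega a` is the number of permutations of `{0, …, a.sum}` with the prescribed
alternating monotonicity pattern given by the block lengths in `a`. -/
noncomputable def Omega (a : List ℕ) : ℕ :=
  Nat.card {τ : Equiv.Perm (Fin (a.sum + 1)) // MonotCond a τ}

/-- The normalized quantity `Ω'(a) = Ω(a) / (N + 1)!` where `N = a.sum`. -/
noncomputable def Omega' (a : List ℕ) : ℝ :=
  (Omega a : ℝ) / (Nat.factorial (a.sum + 1))

/-- The interleaved list `[i t₁, j t₁, i t₂, j t₂, …]` for the indices in `l`. -/
def pairList (i j : ℕ → ℕ) (l : List ℕ) : List ℕ :=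
  (l.map fun t => [i t, j t]).flatten


def blk : List ℕ → ℕ → ℕ
  | [], _ => 0
  | x :: t, q => if q < x then 0 else blk t (q - x) + 1

def wd (a : List ℕ) (q : ℕ) : Bool := decide (blk a q % 2 = 0)

def pat2 (m : ℕ) (w : ℕ → Bool) (τ : Equiv.Perm (Fin m)) : Prop :=
  ∀ j : ℕ, ∀ h : j + 1 < m,
    if w j then ((τ ⟨j, Nat.lt_of_succ_lt h⟩ : Fin m) : ℕ) < ((τ ⟨j+1, h⟩ : Fin m) : ℕ)
    else ((τ ⟨j+1, h⟩ : Fin m) : ℕ) < ((τ ⟨j, Nat.lt_of_succ_lt h⟩ : Fin m) : ℕ)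

noncomputable def C2 (m : ℕ) (w : ℕ → Bool) : ℕ :=
  Nat.card {τ : Equiv.Perm (Fin m) // pat2 m w τ}

def shiftw (w : ℕ → Bool) (p : ℕ) : ℕ → Bool := fun t => w (t + p + 1)

lemma blk_append_left (a b : List ℕ) (q : ℕ) (h : q < a.sum) :
    blk (a ++ b) q = blk a q := by
  induction a generalizing q with
  | nil => simp at h
  | cons x t ih =>
    simp only [List.cons_append, blk]
    by_cases hx : q < x
    · simp [hx]
    · simp only [hx, if_false]
      rw [ih]
      simp only [List.sum_cons] at h
      omega

lemma blk_append_right (a b : List ℕ) (q : ℕ) :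
    blk (a ++ b) (a.sum + q) = a.length + blk b q := by
  induction a generalizing q with
  | nil => simp
  | cons x t ih =>
    simp only [List.cons_append, blk, List.sum_cons]
    have hx : ¬ (x + t.sum + q < x) := by omega
    simp only [hx, if_false]
    have : x + t.sum + q - x = t.sum + q := by omega
    rw [this, ih]
    simp; omega

lemma blk_spec (a : List ℕ) (q : ℕ) (h : q < a.sum) :
    blk a q < a.length ∧ (a.take (blk a q)).sum ≤ q ∧ q < (a.take (blk a q + 1)).sum := by
  induction a generalizing q with
  | nil => simp at h
  | cons x t ih =>
    simp only [blk]
    by_cases hx : q < x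
    · simp [hx]
    · simp only [hx, if_false]
      simp only [List.sum_cons] at h
      obtain ⟨h1, h2, h3⟩ := ih (q - x) (by omega)
      refine ⟨by simpa using h1, ?_, ?_⟩
      · simp only [List.take_succ_cons, List.sum_cons]; omega
      · simp only [List.take_succ_cons, List.sum_cons]; omega

lemma blk_eq (a : List ℕ) (k q : ℕ) (hk : k < a.length)
    (h1 : (a.take k).sum ≤ q) (h2 : q < (a.take (k+1)).sum) : blk a q = k := by
  induction a generalizing k q with
  | nil => simp at hk
  | cons x t ih =>
    cases k with
    | zero =>
      simp only [List.take_succ_cons, List.take_zero, List.sum_cons, List.sum_nil] at h2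
      have : q < x := by omega
      simp [blk, this]
    | succ k =>
      simp only [List.take_succ_cons, List.sum_cons] at h1 h2
      have hx : ¬ q < x := by omega
      simp only [blk, hx, if_false]
      rw [ih k (q - x) (by simpa using hk) (by omega) (by omega)]

lemma sum_take_le (a : List ℕ) (k : ℕ) : (a.take k).sum ≤ a.sum := by
  conv_rhs => rw [← List.take_append_drop k a]
  rw [List.sum_append]; omega

lemma C2_congr (m : ℕ) (w w' : ℕ → Bool) (h : ∀ q, q + 1 < m → w q = w' q) :
    C2 m w = C2 m w' := by
  unfold C2
  apply Nat.card_congr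
  apply Equiv.subtypeEquivRight
  intro τ
  unfold pat2
  constructor <;> intro hp q hq <;> [rw [← h q hq]; rw [h q hq]] <;> exact hp q hq

lemma C2_zero (w : ℕ → Bool) : C2 0 w = 1 := by
  unfold C2
  rw [Nat.card_eq_one_iff_unique]
  constructor
  · constructor
    intro ⟨a, _⟩ ⟨b, _⟩
    have : a = b := Subsingleton.elim a b
    simp [this]
  · exact ⟨1, fun q hq => by omega⟩

lemma Omega_eq (a : List ℕ) : Omega a = C2 (a.sum + 1) (wd a) := by
  unfold Omega C2
  apply Nat.card_congr
  apply Equiv.subtypeEquivRight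
  intro τ
  constructor
  · intro hm q hq
    have hq' : q < a.sum := by omega
    obtain ⟨h1, h2, h3⟩ := blk_spec a q hq'
    have H := hm (blk a q) h1 q h2 h3 hq
    by_cases hpar : blk a q % 2 = 0
    · have hw : wd a q = true := by simp [wd, hpar]
      rw [hw, if_pos rfl]
      rw [if_pos hpar] at H
      exact H
    · have hw : wd a q = false := by simp [wd, hpar]
      rw [hw, if_neg (by simp)]
      rw [if_neg hpar] at H
      exact H
  · intro hp k hk q h1 h2 hq
    have hblk : blk a q = k := blk_eq a k q hk h1 h2
    have H := hp q hq
    by_cases hpar : k % 2 = 0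
    · have hw : wd a q = true := by simp [wd, hblk, hpar]
      rw [hw, if_pos rfl] at H
      rw [if_pos hpar]
      exact H
    · have hw : wd a q = false := by simp [wd, hblk, hpar]
      rw [hw, if_neg (by simp)] at H
      rw [if_neg hpar]
      exact H

lemma Omega_nil : Omega ([] : List ℕ) = 1 := by
  unfold Omega
  rw [Nat.card_eq_one_iff_unique]
  constructor
  · constructor
    intro ⟨a, _⟩ ⟨b, _⟩
    have : a = b := by
      ext x
      have h1 := (a x).isLt
      have h2 := (b x).isLt
      simp only [List.sum_nil] at h1 h2
      omega
    simp [this]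
  · exact ⟨1, fun k hk => by simp at hk⟩

lemma Omega'_nil : Omega' ([] : List ℕ) = 1 := by
  simp [Omega', Omega_nil]

lemma compl_card {n p : ℕ} (s : Finset (Fin n)) (hs : s.card = p) : sᶜ.card = n - p := by
  rw [Finset.card_compl, hs]; simp

def Fm {n p : ℕ} (s : Finset (Fin n)) (hs : s.card = p)
    (σ : Equiv.Perm (Fin p)) (ρ : Equiv.Perm (Fin (n - p))) : Fin (n + 1) → Fin (n + 1) :=
  fun q =>
    if h : (q : ℕ) < p then Fin.succ ((s.orderIsoOfFin hs (σ ⟨q, h⟩)) : Fin n)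
    else if _ : (q : ℕ) = p then ⟨0, by omega⟩
    else Fin.succ ((sᶜ.orderIsoOfFin (compl_card s hs)
      (ρ ⟨(q : ℕ) - p - 1, by have := q.isLt; omega⟩)) : Fin n)

variable {n p : ℕ} (s : Finset (Fin n)) (hs : s.card = p)
    (σ : Equiv.Perm (Fin p)) (ρ : Equiv.Perm (Fin (n - p)))

lemma Fm_lt (q : Fin (n + 1)) (h : (q : ℕ) < p) :
    Fm s hs σ ρ q = Fin.succ ((s.orderIsoOfFin hs (σ ⟨q, h⟩)) : Fin n) := dif_pos h

lemma Fm_mid (q : Fin (n + 1)) (h : (q : ℕ) = p) :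
    Fm s hs σ ρ q = ⟨0, by omega⟩ := by
  unfold Fm
  rw [dif_neg (by omega), dif_pos h]

lemma Fm_gt (q : Fin (n + 1)) (h : p < (q : ℕ)) :
    Fm s hs σ ρ q = Fin.succ ((sᶜ.orderIsoOfFin (compl_card s hs)
      (ρ ⟨(q : ℕ) - p - 1, by have := q.isLt; omega⟩)) : Fin n) := by
  unfold Fm
  rw [dif_neg (by omega), dif_neg (by omega)]

lemma Fm_inj : Function.Injective (Fm s hs σ ρ) := by
  intro a b hab
  have ha := a.isLt
  have hb := b.isLt
  rcases Nat.lt_trichotomy (a : ℕ) p with h1 | h1 | h1 <;>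
    rcases Nat.lt_trichotomy (b : ℕ) p with h2 | h2 | h2
  · rw [Fm_lt s hs σ ρ a h1, Fm_lt s hs σ ρ b h2] at hab
    have := Fin.succ_inj.mp hab
    have := Subtype.coe_injective this
    have := (s.orderIsoOfFin hs).injective this
    have := σ.injective this
    have : (a : ℕ) = (b : ℕ) := by simpa using this
    exact Fin.ext this
  · rw [Fm_lt s hs σ ρ a h1, Fm_mid s hs σ ρ b h2] at hab
    exact absurd (congrArg Fin.val hab) (by simp)
  · rw [Fm_lt s hs σ ρ a h1, Fm_gt s hs σ ρ b h2] at hab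
    have h3 := Fin.succ_inj.mp hab
    have hm1 := (s.orderIsoOfFin hs (σ ⟨a, h1⟩)).2
    have hm2 := (sᶜ.orderIsoOfFin (compl_card s hs)
      (ρ ⟨(b : ℕ) - p - 1, by omega⟩)).2
    rw [← h3] at hm2
    simp only [Finset.mem_compl] at hm2
    exact absurd hm1 hm2
  · rw [Fm_lt s hs σ ρ b h2, Fm_mid s hs σ ρ a h1] at hab
    exact absurd (congrArg Fin.val hab).symm (by simp)
  · exact Fin.ext (h1.trans h2.symm)
  · rw [Fm_mid s hs σ ρ a h1, Fm_gt s hs σ ρ b h2] at hab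
    exact absurd (congrArg Fin.val hab).symm (by simp)
  · rw [Fm_lt s hs σ ρ b h2, Fm_gt s hs σ ρ a h1] at hab
    have h3 := Fin.succ_inj.mp hab
    have hm1 := (s.orderIsoOfFin hs (σ ⟨b, h2⟩)).2
    have hm2 := (sᶜ.orderIsoOfFin (compl_card s hs)
      (ρ ⟨(a : ℕ) - p - 1, by omega⟩)).2
    rw [h3] at hm2
    simp only [Finset.mem_compl] at hm2
    exact absurd hm1 hm2
  · rw [Fm_mid s hs σ ρ b h2, Fm_gt s hs σ ρ a h1] at hab
    exact absurd (congrArg Fin.val hab) (by simp)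
  · rw [Fm_gt s hs σ ρ a h1, Fm_gt s hs σ ρ b h2] at hab
    have := Fin.succ_inj.mp hab
    have := Subtype.coe_injective this
    have := (sᶜ.orderIsoOfFin (compl_card s hs)).injective this
    have := ρ.injective this
    have : (a : ℕ) - p - 1 = (b : ℕ) - p - 1 := by simpa using this
    exact Fin.ext (by omega)

noncomputable def Pm : Equiv.Perm (Fin (n + 1)) :=
  Equiv.ofBijective (Fm s hs σ ρ)
    (Finite.injective_iff_bijective.mp (Fm_inj s hs σ ρ))

lemma Pm_apply (q : Fin (n + 1)) : Pm s hs σ ρ q = Fm s hs σ ρ q := rfl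

lemma oiof_lt {α : Type} [LinearOrder α] (t : Finset α) {k : ℕ} (ht : t.card = k)
    (u v : Fin k) : (t.orderIsoOfFin ht u : α) < (t.orderIsoOfFin ht v : α) ↔ u < v := by
  rw [Subtype.coe_lt_coe, OrderIso.lt_iff_lt]

lemma Pm_pat2 (w : ℕ → Bool) (hp : p < n + 1)
    (hσ : pat2 p w σ) (hρ : pat2 (n - p) (shiftw w p) ρ)
    (hv1 : p = 0 ∨ w (p - 1) = false) (hv2 : p = n ∨ w p = true) :
    pat2 (n + 1) w (Pm s hs σ ρ) := by
  intro q hq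
  rcases Nat.lt_trichotomy q p with h1 | h1 | h1
  · -- q < p
    rcases Nat.lt_or_ge (q + 1) p with h2 | h2
    · -- q + 1 < p : both in left block
      rw [Pm_apply, Pm_apply, Fm_lt s hs σ ρ _ (show ((⟨q, _⟩ : Fin (n+1)) : ℕ) < p from h1),
        Fm_lt s hs σ ρ _ (show ((⟨q+1, hq⟩ : Fin (n+1)) : ℕ) < p from h2)]
      have H := hσ q h2
      have hlt := oiof_lt s hs (σ ⟨q, h1⟩) (σ ⟨q+1, h2⟩)
      have hgt := oiof_lt s hs (σ ⟨q+1, h2⟩) (σ ⟨q, h1⟩)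
      cases hw : w q
      · rw [hw] at H
        simp only [if_neg (Bool.false_ne_true)] at H ⊢
        rw [← Fin.lt_def, Fin.succ_lt_succ_iff]
        exact hgt.mpr (Fin.lt_def.mpr H)
      · rw [hw] at H
        simp only [if_pos rfl] at H ⊢
        rw [← Fin.lt_def, Fin.succ_lt_succ_iff]
        exact hlt.mpr (Fin.lt_def.mpr H)
    · -- q + 1 = p : descent into the valley
      have h2' : q + 1 = p := by omega
      rw [Pm_apply, Pm_apply, Fm_lt s hs σ ρ _ (show ((⟨q, _⟩ : Fin (n+1)) : ℕ) < p from h1),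
        Fm_mid s hs σ ρ _ (show ((⟨q+1, hq⟩ : Fin (n+1)) : ℕ) = p from h2')]
      have hw : w q = false := by
        rcases hv1 with h | h
        · omega
        · have : q = p - 1 := by omega
          rw [this]; exact h
      rw [hw]
      simp only [if_neg (Bool.false_ne_true)]
      simp only [Fin.val_succ]
      exact Nat.succ_pos _
  · -- q = p : ascent out of the valley
    rw [Pm_apply, Pm_apply, Fm_mid s hs σ ρ _ (show ((⟨q, _⟩ : Fin (n+1)) : ℕ) = p from h1),
      Fm_gt s hs σ ρ _ (show p < ((⟨q+1, hq⟩ : Fin (n+1)) : ℕ) from by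
        have : p < q + 1 := by omega
        exact this)]
    have hw : w q = true := by
      rcases hv2 with h | h
      · omega
      · rw [h1]; exact h
    rw [hw]
    simp only [if_pos rfl]
    simp only [Fin.val_succ]
    exact Nat.succ_pos _
  · -- q > p : both in right block
    rw [Pm_apply, Pm_apply, Fm_gt s hs σ ρ _ (show p < ((⟨q, _⟩ : Fin (n+1)) : ℕ) from h1),
      Fm_gt s hs σ ρ _ (show p < ((⟨q+1, hq⟩ : Fin (n+1)) : ℕ) from Nat.lt_succ_of_lt h1)]
    set t := q - p - 1 with ht
    have ht1 : t + 1 < n - p := by omega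
    have H := hρ t ht1
    have hwt : shiftw w p t = w q := by
      unfold shiftw; congr 1; omega
    rw [hwt] at H
    have e1 : ((⟨q, Nat.lt_of_succ_lt hq⟩ : Fin (n+1)) : ℕ) - p - 1 = t := rfl
    have e2 : q + 1 - p - 1 = t + 1 := by omega
    have hlt := oiof_lt sᶜ (compl_card s hs) (ρ ⟨t, by omega⟩) (ρ ⟨t+1, ht1⟩)
    have hgt := oiof_lt sᶜ (compl_card s hs) (ρ ⟨t+1, ht1⟩) (ρ ⟨t, by omega⟩)
    have hidx : (⟨((⟨q, Nat.lt_of_succ_lt hq⟩ : Fin (n+1)) : ℕ) - p - 1, by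
        have := (⟨q, Nat.lt_of_succ_lt hq⟩ : Fin (n+1)).isLt; omega⟩ : Fin (n - p)) =
        ⟨t, by omega⟩ := by
      apply Fin.ext; exact e1
    have hidx2 : (⟨((⟨q+1, hq⟩ : Fin (n+1)) : ℕ) - p - 1, by
        have := (⟨q+1, hq⟩ : Fin (n+1)).isLt; omega⟩ : Fin (n - p)) =
        ⟨t+1, ht1⟩ := by
      apply Fin.ext; exact e2
    cases hw : w q
    · rw [hw] at H
      simp only [if_neg (Bool.false_ne_true)] at H ⊢
      rw [hidx, hidx2, ← Fin.lt_def, Fin.succ_lt_succ_iff]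
      exact hgt.mpr (Fin.lt_def.mpr H)
    · rw [hw] at H
      simp only [if_pos rfl] at H ⊢
      rw [hidx, hidx2, ← Fin.lt_def, Fin.succ_lt_succ_iff]
      exact hlt.mpr (Fin.lt_def.mpr H)

lemma Pm_valley (hp : p < n + 1) : Pm s hs σ ρ ⟨p, hp⟩ = 0 := by
  rw [Pm_apply, Fm_mid s hs σ ρ _ rfl]
  apply Fin.ext
  simp

lemma Fm_mem_iff (v : Fin n) :
    v ∈ s ↔ ∃ x : Fin p, Fm s hs σ ρ ⟨(x : ℕ), by
      have := x.isLt
      have : p ≤ n := by rw [← hs]; exact (Finset.card_le_univ s).trans (by simp)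
      omega⟩ = Fin.succ v := by
  constructor
  · intro hv
    refine ⟨σ.symm ((s.orderIsoOfFin hs).symm ⟨v, hv⟩), ?_⟩
    rw [Fm_lt s hs σ ρ _ (by exact (σ.symm _).isLt)]
    congr 1
    have : (⟨((σ.symm ((s.orderIsoOfFin hs).symm ⟨v, hv⟩) : Fin p) : ℕ), _⟩ : Fin p)
        = σ.symm ((s.orderIsoOfFin hs).symm ⟨v, hv⟩) := Fin.ext rfl
    rw [this, Equiv.apply_symm_apply, OrderIso.apply_symm_apply]
  · rintro ⟨x, hx⟩
    rw [Fm_lt s hs σ ρ _ (by exact x.isLt)] at hx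
    have := Fin.succ_inj.mp hx
    rw [← this]
    exact ((s.orderIsoOfFin hs) (σ ⟨(x : ℕ), x.isLt⟩)).2

lemma fiber_card (n p : ℕ) (w : ℕ → Bool) (hp : p < n + 1)
    (hv1 : p = 0 ∨ w (p - 1) = false) (hv2 : p = n ∨ w p = true) :
    Nat.card {τ : Equiv.Perm (Fin (n+1)) // pat2 (n+1) w τ ∧ τ ⟨p, hp⟩ = 0} =
      n.choose p * (C2 p w * C2 (n - p) (shiftw w p)) := by
  classical
  have hpn : p ≤ n := by omega
  let Φ : ({s : Finset (Fin n) // s.card = p} ×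
      ({σ : Equiv.Perm (Fin p) // pat2 p w σ} ×
       {ρ : Equiv.Perm (Fin (n - p)) // pat2 (n - p) (shiftw w p) ρ})) →
      {τ : Equiv.Perm (Fin (n+1)) // pat2 (n+1) w τ ∧ τ ⟨p, hp⟩ = 0} := fun x =>
    ⟨Pm x.1.1 x.1.2 x.2.1.1 x.2.2.1,
      Pm_pat2 x.1.1 x.1.2 x.2.1.1 x.2.2.1 w hp x.2.1.2 x.2.2.2 hv1 hv2,
      Pm_valley x.1.1 x.1.2 x.2.1.1 x.2.2.1 hp⟩
  have hbij : Function.Bijective Φ := by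
    constructor
    · -- injectivity
      rintro ⟨⟨s, hs⟩, ⟨σ, hσ⟩, ⟨ρ, hρ⟩⟩ ⟨⟨s', hs'⟩, ⟨σ', hσ'⟩, ⟨ρ', hρ'⟩⟩ h
      have hFm : ∀ q : Fin (n+1), Fm s hs σ ρ q = Fm s' hs' σ' ρ' q := by
        intro q
        have := Subtype.ext_iff.mp h
        exact Equiv.ext_iff.mp this q
      have hss' : s = s' := by
        ext v
        rw [Fm_mem_iff s hs σ ρ v, Fm_mem_iff s' hs' σ' ρ' v]
        constructor
        · rintro ⟨x, hx⟩; exact ⟨x, by rw [← hFm]; exact hx⟩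
        · rintro ⟨x, hx⟩; exact ⟨x, by rw [hFm]; exact hx⟩
      subst hss'
      have hps : hs' = hs := rfl
      have hσσ' : σ = σ' := by
        apply Equiv.ext
        intro x
        have hx : ((⟨(x : ℕ), by omega⟩ : Fin (n+1)) : ℕ) < p := x.isLt
        have h2 := hFm ⟨(x : ℕ), by omega⟩
        rw [Fm_lt s hs σ ρ _ hx, Fm_lt s hs σ' ρ' _ hx] at h2
        have h3 := Subtype.coe_injective (Fin.succ_inj.mp h2)
        have h4 := (s.orderIsoOfFin hs).injective h3
        have hxx : (⟨((⟨(x : ℕ), by omega⟩ : Fin (n+1)) : ℕ), hx⟩ : Fin p) = x := Fin.ext rfl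
        rwa [hxx] at h4
      have hρρ' : ρ = ρ' := by
        apply Equiv.ext
        intro y
        have hy : p < ((⟨p + 1 + (y : ℕ), by have := y.isLt; omega⟩ : Fin (n+1)) : ℕ) := by
          show p < p + 1 + (y : ℕ)
          omega
        have h2 := hFm ⟨p + 1 + (y : ℕ), by have := y.isLt; omega⟩
        rw [Fm_gt s hs σ ρ _ hy, Fm_gt s hs σ' ρ' _ hy] at h2
        have h3 := Subtype.coe_injective (Fin.succ_inj.mp h2)
        have h4 := (sᶜ.orderIsoOfFin (compl_card s hs)).injective h3
        have hyy : (⟨((⟨p + 1 + (y : ℕ), by have := y.isLt; omega⟩ : Fin (n+1)) : ℕ) - p - 1,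
            by have := (⟨p + 1 + (y : ℕ), by have := y.isLt; omega⟩ : Fin (n+1)).isLt; omega⟩ :
            Fin (n - p)) = y := by
          apply Fin.ext
          show p + 1 + (y : ℕ) - p - 1 = (y : ℕ)
          omega
        rwa [hyy] at h4
      subst hσσ'
      subst hρρ'
      refine Prod.ext rfl (Prod.ext ?_ ?_) <;> exact Subtype.ext rfl
    · -- surjectivity
      rintro ⟨τ, hpat, hτ0⟩
      have hne : ∀ (x : ℕ) (hx : x < n + 1), x ≠ p → τ ⟨x, hx⟩ ≠ 0 := by
        intro x hx hxp h0
        have := τ.injective (h0.trans hτ0.symm)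
        exact hxp (congrArg Fin.val this)
      let hL : Fin p → Fin n := fun x =>
        (τ ⟨(x : ℕ), by have := x.isLt; omega⟩).pred
          (hne _ _ (by have := x.isLt; omega))
      have hLinj : Function.Injective hL := by
        intro a b hab
        have h2 := Fin.pred_inj.mp hab
        have h3 := τ.injective h2
        have h4 : (a : ℕ) = (b : ℕ) := by simpa using h3
        exact Fin.ext h4
      let s : Finset (Fin n) := Finset.image hL Finset.univ
      have hs : s.card = p := by
        rw [Finset.card_image_of_injective _ hLinj, Finset.card_univ, Fintype.card_fin]
      let hR : Fin (n - p) → Fin n := fun y =>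
        (τ ⟨p + 1 + (y : ℕ), by have := y.isLt; omega⟩).pred
          (hne _ _ (by omega))
      have hRinj : Function.Injective hR := by
        intro a b hab
        have h2 := Fin.pred_inj.mp hab
        have h3 := congrArg Fin.val (τ.injective h2)
        simp only [] at h3
        exact Fin.ext (by omega)
      have hmemL : ∀ x, hL x ∈ s := fun x => Finset.mem_image_of_mem hL (Finset.mem_univ x)
      have hmemR : ∀ y, hR y ∈ sᶜ := by
        intro y
        rw [Finset.mem_compl]
        intro hy
        obtain ⟨x, -, hx⟩ := Finset.mem_image.mp hy
        have h2 := Fin.pred_inj.mp hx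
        have h3 := congrArg Fin.val (τ.injective h2)
        simp only [] at h3
        have := x.isLt
        omega
      let σ0 : Fin p → Fin p := fun x => (s.orderIsoOfFin hs).symm ⟨hL x, hmemL x⟩
      have hσ0 : Function.Injective σ0 := by
        intro a b hab
        have := (s.orderIsoOfFin hs).symm.injective hab
        exact hLinj (Subtype.ext_iff.mp this)
      let σ : Equiv.Perm (Fin p) := Equiv.ofBijective σ0 (Finite.injective_iff_bijective.mp hσ0)
      let ρ0 : Fin (n - p) → Fin (n - p) := fun y =>
        (sᶜ.orderIsoOfFin (compl_card s hs)).symm ⟨hR y, hmemR y⟩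
      have hρ0 : Function.Injective ρ0 := by
        intro a b hab
        have := (sᶜ.orderIsoOfFin (compl_card s hs)).symm.injective hab
        exact hRinj (Subtype.ext_iff.mp this)
      let ρ : Equiv.Perm (Fin (n - p)) :=
        Equiv.ofBijective ρ0 (Finite.injective_iff_bijective.mp hρ0)
      have keyσ : ∀ x y : Fin p, (σ x < σ y ↔
          τ ⟨(x : ℕ), by have := x.isLt; omega⟩ < τ ⟨(y : ℕ), by have := y.isLt; omega⟩) := by
        intro x y
        show σ0 x < σ0 y ↔ _
        show (s.orderIsoOfFin hs).symm ⟨hL x, hmemL x⟩ <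
          (s.orderIsoOfFin hs).symm ⟨hL y, hmemL y⟩ ↔ _
        rw [OrderIso.lt_iff_lt, Subtype.mk_lt_mk]
        show (τ _).pred _ < (τ _).pred _ ↔ _
        rw [Fin.pred_lt_pred_iff]
      have keyρ : ∀ x y : Fin (n - p), (ρ x < ρ y ↔
          τ ⟨p + 1 + (x : ℕ), by have := x.isLt; omega⟩ <
          τ ⟨p + 1 + (y : ℕ), by have := y.isLt; omega⟩) := by
        intro x y
        show ρ0 x < ρ0 y ↔ _
        show (sᶜ.orderIsoOfFin (compl_card s hs)).symm ⟨hR x, hmemR x⟩ <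
          (sᶜ.orderIsoOfFin (compl_card s hs)).symm ⟨hR y, hmemR y⟩ ↔ _
        rw [OrderIso.lt_iff_lt, Subtype.mk_lt_mk]
        show (τ _).pred _ < (τ _).pred _ ↔ _
        rw [Fin.pred_lt_pred_iff]
      have hσpat : pat2 p w σ := by
        intro jj hjj
        have H := hpat jj (by omega)
        have k1 := keyσ ⟨jj, by omega⟩ ⟨jj+1, hjj⟩
        have k2 := keyσ ⟨jj+1, hjj⟩ ⟨jj, by omega⟩
        cases hw : w jj
        · rw [hw] at H
          simp only [if_neg (Bool.false_ne_true)] at H ⊢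
          rw [← Fin.lt_def]
          exact k2.mpr (Fin.lt_def.mpr H)
        · rw [hw] at H
          simp only [if_pos rfl] at H ⊢
          rw [← Fin.lt_def]
          exact k1.mpr (Fin.lt_def.mpr H)
      have hρpat : pat2 (n - p) (shiftw w p) ρ := by
        intro t ht
        have H := hpat (p + 1 + t) (by omega)
        have hww : w (p + 1 + t) = shiftw w p t := by
          unfold shiftw
          congr 1
          omega
        rw [hww] at H
        have k1 := keyρ ⟨t, by omega⟩ ⟨t+1, ht⟩
        have k2 := keyρ ⟨t+1, ht⟩ ⟨t, by omega⟩
        cases hw : shiftw w p t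
        · rw [hw] at H
          simp only [if_neg (Bool.false_ne_true)] at H ⊢
          rw [← Fin.lt_def]
          exact k2.mpr (Fin.lt_def.mpr H)
        · rw [hw] at H
          simp only [if_pos rfl] at H ⊢
          rw [← Fin.lt_def]
          exact k1.mpr (Fin.lt_def.mpr H)
      refine ⟨⟨⟨s, hs⟩, ⟨σ, hσpat⟩, ⟨ρ, hρpat⟩⟩, ?_⟩
      apply Subtype.ext
      show Pm s hs σ ρ = τ
      apply Equiv.ext
      intro q
      rw [Pm_apply]
      rcases Nat.lt_trichotomy (q : ℕ) p with h1 | h1 | h1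
      · rw [Fm_lt s hs σ ρ q h1]
        rw [show σ ⟨(q : ℕ), h1⟩ = (s.orderIsoOfFin hs).symm
          ⟨hL ⟨(q : ℕ), h1⟩, hmemL _⟩ from rfl]
        rw [OrderIso.apply_symm_apply]
        rw [show ((⟨hL ⟨(q : ℕ), h1⟩, hmemL _⟩ : {v // v ∈ s}) : Fin n)
          = hL ⟨(q : ℕ), h1⟩ from rfl]
        rw [show hL ⟨(q : ℕ), h1⟩ = (τ ⟨(q : ℕ), by omega⟩).pred
          (hne _ _ (by omega)) from rfl]
        rw [Fin.succ_pred]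
      · rw [Fm_mid s hs σ ρ q h1]
        rw [show q = (⟨p, hp⟩ : Fin (n+1)) from Fin.ext h1, hτ0]
        exact Fin.ext rfl
      · rw [Fm_gt s hs σ ρ q h1]
        rw [show ρ ⟨(q : ℕ) - p - 1, by have := q.isLt; omega⟩ =
          (sᶜ.orderIsoOfFin (compl_card s hs)).symm
            ⟨hR ⟨(q : ℕ) - p - 1, by have := q.isLt; omega⟩, hmemR _⟩ from rfl]
        rw [OrderIso.apply_symm_apply]
        rw [show ((⟨hR ⟨(q : ℕ) - p - 1, by have := q.isLt; omega⟩, hmemR _⟩ :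
          {v // v ∈ sᶜ}) : Fin n) = hR ⟨(q : ℕ) - p - 1, by have := q.isLt; omega⟩ from rfl]
        rw [show hR ⟨(q : ℕ) - p - 1, by have := q.isLt; omega⟩ =
          (τ ⟨p + 1 + ((q : ℕ) - p - 1), by have := q.isLt; omega⟩).pred
          (hne _ _ (by have := q.isLt; omega)) from rfl]
        rw [Fin.succ_pred]
        exact congrArg τ (Fin.ext (by have := q.isLt; simp only []; omega))
  have hcard : Nat.card {s : Finset (Fin n) // s.card = p} = n.choose p := by
    rw [Nat.card_eq_fintype_card, Fintype.card_finset_len, Fintype.card_fin]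
  calc Nat.card {τ : Equiv.Perm (Fin (n+1)) // pat2 (n+1) w τ ∧ τ ⟨p, hp⟩ = 0}
      = Nat.card ({s : Finset (Fin n) // s.card = p} ×
        ({σ : Equiv.Perm (Fin p) // pat2 p w σ} ×
         {ρ : Equiv.Perm (Fin (n - p)) // pat2 (n - p) (shiftw w p) ρ})) :=
        (Nat.card_eq_of_bijective Φ hbij).symm
    _ = n.choose p * (C2 p w * C2 (n - p) (shiftw w p)) := by
        rw [Nat.card_prod, Nat.card_prod, hcard]
        rfl

lemma fiber_empty (n p : ℕ) (w : ℕ → Bool) (hp : p < n + 1)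
    (hnv : ¬((p = 0 ∨ w (p - 1) = false) ∧ (p = n ∨ w p = true))) :
    Nat.card {τ : Equiv.Perm (Fin (n+1)) // pat2 (n+1) w τ ∧ τ ⟨p, hp⟩ = 0} = 0 := by
  have hE : IsEmpty {τ : Equiv.Perm (Fin (n+1)) // pat2 (n+1) w τ ∧ τ ⟨p, hp⟩ = 0} := by
    constructor
    rintro ⟨τ, hpat, h0⟩
    rcases not_and_or.mp hnv with hl | hr
    · push_neg at hl
      obtain ⟨hp0, hw⟩ := hl
      replace hw : w (p - 1) = true := by simpa using hw
      have H := hpat (p - 1) (by omega)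
      rw [hw] at H
      simp only [if_pos rfl] at H
      have hidx : (⟨p - 1 + 1, by omega⟩ : Fin (n+1)) = ⟨p, hp⟩ := by
        apply Fin.ext
        show p - 1 + 1 = p
        omega
      rw [hidx, h0] at H
      simp at H
    · push_neg at hr
      obtain ⟨hpn, hw⟩ := hr
      replace hw : w p = false := by simpa using hw
      have hplt : p < n := by omega
      have H := hpat p (by omega)
      rw [hw] at H
      simp only [if_neg (Bool.false_ne_true)] at H
      have hidx : (⟨p, by omega⟩ : Fin (n+1)) = ⟨p, hp⟩ := Fin.ext rfl
      rw [hidx, h0] at H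
      simp at H
  exact Nat.card_of_isEmpty

lemma C2_succ (n : ℕ) (w : ℕ → Bool) :
    C2 (n + 1) w = ∑ p ∈ Finset.range (n + 1),
      if (p = 0 ∨ w (p - 1) = false) ∧ (p = n ∨ w p = true)
      then n.choose p * (C2 p w * C2 (n - p) (shiftw w p)) else 0 := by
  classical
  let F : Fin (n+1) → Type := fun pp =>
    {τ : Equiv.Perm (Fin (n+1)) // pat2 (n+1) w τ ∧ τ pp = 0}
  have e1 : {τ : Equiv.Perm (Fin (n+1)) // pat2 (n+1) w τ} ≃ Σ pp : Fin (n+1), F pp := by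
    refine Equiv.trans
      (Equiv.sigmaFiberEquiv (fun τ : {τ : Equiv.Perm (Fin (n+1)) // pat2 (n+1) w τ} =>
        (τ : Equiv.Perm (Fin (n+1))).symm 0)).symm ?_
    refine Equiv.sigmaCongrRight fun pp => ?_
    refine Equiv.trans (Equiv.subtypeSubtypeEquivSubtypeInter
      (fun τ : Equiv.Perm (Fin (n+1)) => pat2 (n+1) w τ)
      (fun τ => τ.symm 0 = pp)) ?_
    apply Equiv.subtypeEquivRight
    intro τ
    constructor
    · rintro ⟨h1, h2⟩
      exact ⟨h1, by rw [← h2, Equiv.apply_symm_apply]⟩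
    · rintro ⟨h1, h2⟩
      exact ⟨h1, by rw [← h2, Equiv.symm_apply_apply]⟩
  have e2 : C2 (n+1) w = ∑ pp : Fin (n+1), Nat.card (F pp) := by
    rw [C2, Nat.card_congr e1, Nat.card_eq_fintype_card, Fintype.card_sigma]
    exact Finset.sum_congr rfl fun pp _ => (Nat.card_eq_fintype_card).symm
  let g : ℕ → ℕ := fun p =>
    if h : p < n + 1 then
      Nat.card {τ : Equiv.Perm (Fin (n+1)) // pat2 (n+1) w τ ∧ τ ⟨p, h⟩ = 0} else 0
  have e3 : ∀ pp : Fin (n+1), Nat.card (F pp) = g (pp : ℕ) := by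
    intro pp
    show _ = dite _ _ _
    rw [dif_pos pp.isLt]
  rw [e2]
  rw [Finset.sum_congr rfl fun pp _ => e3 pp]
  rw [Fin.sum_univ_eq_sum_range g (n+1)]
  refine Finset.sum_congr rfl fun p hp => ?_
  have hplt : p < n + 1 := Finset.mem_range.mp hp
  show dite _ _ _ = _
  rw [dif_pos hplt]
  by_cases hv : (p = 0 ∨ w (p - 1) = false) ∧ (p = n ∨ w p = true)
  · rw [if_pos hv]
    exact fiber_card n p w hplt hv.1 hv.2
  · rw [if_neg hv]
    exact fiber_empty n p w hplt hv

lemma pairList_append (i j : ℕ → ℕ) (l1 l2 : List ℕ) :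
    pairList i j (l1 ++ l2) = pairList i j l1 ++ pairList i j l2 := by
  simp [pairList]

lemma pairList_single (i j : ℕ → ℕ) (t : ℕ) : pairList i j [t] = [i t, j t] := by
  simp [pairList]

lemma pairList_sum_range (i j : ℕ → ℕ) (m : ℕ) :
    (pairList i j (List.range m)).sum = ∑ k ∈ Finset.range m, (i k + j k) := by
  induction m with
  | zero => simp [pairList]
  | succ m ih =>
    rw [List.range_succ, pairList_append, List.sum_append, ih, pairList_single,
      Finset.sum_range_succ]
    simp

lemma pairList_length_range (i j : ℕ → ℕ) (m : ℕ) : (pairList i j (List.range m)).length = 2 * m := by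
  induction m with
  | zero => simp [pairList]
  | succ m ih =>
    rw [List.range_succ, pairList_append, List.length_append, ih, pairList_single]
    simp
    omega

lemma range_decomp (n k : ℕ) (hk : k < n) :
    List.range n = List.range k ++ [k] ++ (List.range n).drop (k + 1) := by
  conv_lhs => rw [← List.take_append_drop (k+1) (List.range n)]
  congr 1
  rw [List.take_range]
  have : min (k+1) n = k+1 := by omega
  rw [this, List.range_succ]

lemma pairList_decomp (i j : ℕ → ℕ) (n k : ℕ) (hk : k < n) :
    pairList i j (List.range n) = pairList i j (List.range k) ++
      (i k :: j k :: pairList i j ((List.range n).drop (k + 1))) := by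
  conv_lhs => rw [range_decomp n k hk]
  rw [pairList_append, pairList_append, pairList_single]
  simp

lemma arith_key (N p : ℕ) (hp : p ≤ N) (A B : ℕ) :
    ((N.choose p * (A * B) : ℕ) : ℝ) / (Nat.factorial (N+1)) =
      1/((N:ℝ)+1) * ((A : ℝ)/(Nat.factorial p) * ((B : ℝ)/(Nat.factorial (N - p)))) := by
  have h1 : N.choose p * p.factorial * (N-p).factorial = N.factorial :=
    Nat.choose_mul_factorial_mul_factorial hp
  have h1' : (N.choose p : ℝ) * (Nat.factorial p) * (Nat.factorial (N-p)) = Nat.factorial N := by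
    exact_mod_cast congrArg (Nat.cast (R := ℝ)) h1
  have hfac : (Nat.factorial (N+1) : ℝ) = ((N:ℝ)+1) * Nat.factorial N := by
    rw [Nat.factorial_succ]; push_cast; ring
  have hf1 : (Nat.factorial p : ℝ) ≠ 0 := by
    exact_mod_cast (Nat.factorial_pos p).ne'
  have hf2 : (Nat.factorial (N-p) : ℝ) ≠ 0 := by
    exact_mod_cast (Nat.factorial_pos (N-p)).ne'
  have hf3 : (Nat.factorial N : ℝ) ≠ 0 := by
    exact_mod_cast (Nat.factorial_pos N).ne'
  have hN1 : ((N:ℝ)+1) ≠ 0 := by positivity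
  rw [hfac]
  push_cast
  field_simp
  linear_combination ((A:ℝ) * B) * h1'
theorem stmt_8 (n : ℕ) (hn : 1 ≤ n) (i j : ℕ → ℕ)
    (hi : ∀ k < n, 0 < i k) (hj : ∀ k < n, 0 < j k) :
    Omega' (pairList i j (List.range n)) =
      (1 / ((∑ k ∈ Finset.range n, (i k + j k) : ℕ) + 1 : ℝ)) *
        ∑ k ∈ Finset.range (n + 1),
          Omega' (if k = 0 then []
            else pairList i j (List.range (k - 1)) ++ [i (k - 1), j (k - 1) - 1]) *
          Omega' (if k = n then []
            else (i k - 1) :: j k :: pairList i j ((List.range n).drop (k + 1))) := by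
  classical
  set N := ∑ k ∈ Finset.range n, (i k + j k) with hNdef
  set a := pairList i j (List.range n) with ha
  set w := wd a with hwdef
  set S : ℕ → ℕ := fun k => ∑ t ∈ Finset.range k, (i t + j t) with hSdef
  have hSN : S n = N := rfl
  have haSum : a.sum = N := pairList_sum_range i j n
  have hSstep : ∀ k, S (k+1) = S k + (i k + j k) := fun k => Finset.sum_range_succ _ k
  have hSmono' : ∀ k l, k ≤ l → S k ≤ S l := by
    intro k l hkl
    exact Finset.sum_le_sum_of_subset (Finset.range_subset_range.mpr hkl)
  have hSmono : ∀ k l, k < l → l ≤ n → S k < S l := by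
    intro k l hkl hln
    have h1 : S (k+1) ≤ S l := hSmono' _ _ hkl
    have h2 := hSstep k
    have h3 := hi k (by omega)
    omega
  have hSval : ∀ m, (pairList i j (List.range m)).sum = S m :=
    fun m => pairList_sum_range i j m
  have hdecomp : ∀ k, k < n → a = pairList i j (List.range k) ++
      (i k :: j k :: pairList i j ((List.range n).drop (k + 1))) := by
    intro k hk
    rw [ha]
    exact pairList_decomp i j n k hk
  -- block values of the word
  have hblk2 : ∀ k, k < n → ∀ t, t < i k + j k →
      blk a (S k + t) = 2 * k + (if t < i k then 0 else 1) := by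
    intro k hk t ht
    rw [hdecomp k hk]
    rw [show S k + t = (pairList i j (List.range k)).sum + t by rw [hSval]]
    rw [blk_append_right, pairList_length_range]
    congr 1
    by_cases hti : t < i k
    · rw [if_pos hti]
      simp [blk, hti]
    · rw [if_neg hti]
      have h1 : t - i k < j k := by omega
      simp [blk, hti, h1]
  have hw_asc : ∀ k, k < n → ∀ t, t < i k → w (S k + t) = true := by
    intro k hk t ht
    show wd a (S k + t) = true
    unfold wd
    rw [hblk2 k hk t (by omega), if_pos ht]
    simp
  have hw_desc : ∀ k, k < n → ∀ t, i k ≤ t → t < i k + j k → w (S k + t) = false := by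
    intro k hk t ht1 ht2
    show wd a (S k + t) = false
    unfold wd
    rw [hblk2 k hk t ht2, if_neg (by omega)]
    simp
  -- every position below N is in a block
  have hex : ∀ m, m ≤ n → ∀ q, q < S m → ∃ k, k < m ∧ S k ≤ q ∧ q < S (k+1) := by
    intro m
    induction m with
    | zero => intro _ q hq; simp [hSdef] at hq
    | succ m ih =>
      intro hm q hq
      by_cases hq' : q < S m
      · obtain ⟨k, h1, h2, h3⟩ := ih (by omega) q hq'
        exact ⟨k, by omega, h2, h3⟩
      · exact ⟨m, by omega, by omega, hq⟩
  -- valley characterization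
  have hvalley : ∀ p, p < N + 1 →
      (((p = 0 ∨ w (p-1) = false) ∧ (p = N ∨ w p = true)) ↔ ∃ k, k ≤ n ∧ S k = p) := by
    intro p hp
    constructor
    · rintro ⟨h1, h2⟩
      by_cases hpN : p = N
      · exact ⟨n, le_rfl, by rw [hSN, hpN]⟩
      · have hpN' : p < N := by omega
        obtain ⟨k, hk, hk1, hk2⟩ := hex n le_rfl p (by rw [hSN]; omega)
        by_cases hpk : p = S k
        · exact ⟨k, by omega, hpk.symm⟩
        · exfalso
          have h3 : S k < p := by omega
          have h4 : w p = true := by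
            rcases h2 with h | h
            · omega
            · exact h
          set t := p - S k with htdef
          have ht : t < i k + j k := by
            have := hSstep k
            omega
          have h5 : t < i k := by
            by_contra h5
            have hh := hw_desc k hk t (by omega) ht
            rw [show S k + t = p by omega] at hh
            rw [h4] at hh
            cases hh
          have h6 : w (p-1) = true := by
            have hh := hw_asc k hk (t-1) (by omega)
            rw [show S k + (t-1) = p - 1 by omega] at hh
            exact hh
          have h7 : w (p-1) = false := by
            rcases h1 with h | h
            · omega
            · exact h
          rw [h6] at h7
          cases h7
    · rintro ⟨k, hk, rfl⟩
      constructor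
      · by_cases hk0 : k = 0
        · left
          rw [hk0]
          simp [hSdef]
        · right
          have hk1 : k - 1 < n := by omega
          have hik := hi (k-1) hk1
          have hjk := hj (k-1) hk1
          have hs := hSstep (k-1)
          rw [show k - 1 + 1 = k by omega] at hs
          have hh := hw_desc (k-1) hk1 (i (k-1) + j (k-1) - 1) (by omega) (by omega)
          rw [show S (k-1) + (i (k-1) + j (k-1) - 1) = S k - 1 by omega] at hh
          exact hh
      · by_cases hkn : k = n
        · left
          rw [hkn, hSN]
        · right
          have hh := hw_asc k (by omega) 0 (hi k (by omega))
          rw [Nat.add_zero] at hh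
          exact hh
  -- the decomposition of C2
  have hC2 := C2_succ N w
  -- reindex the sum over valleys
  set f : ℕ → ℕ := fun p =>
    if (p = 0 ∨ w (p - 1) = false) ∧ (p = N ∨ w p = true)
    then N.choose p * (C2 p w * C2 (N - p) (shiftw w p)) else 0 with hfdef
  have hSinj : ∀ x ∈ Finset.range (n+1), ∀ y ∈ Finset.range (n+1), S x = S y → x = y := by
    intro x hx y hy hxy
    by_contra hne
    rcases Nat.lt_or_ge x y with h | h
    · have := hSmono x y h (by simp at hy; omega)
      omega
    · have hyx : y < x := by omega
      have := hSmono y x hyx (by simp at hx; omega)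
      omega
  have himg : ∑ p ∈ Finset.range (N+1), f p = ∑ k ∈ Finset.range (n+1), f (S k) := by
    rw [← Finset.sum_image (g := S) (f := f) hSinj]
    refine (Finset.sum_subset ?_ ?_).symm
    · intro p hp
      obtain ⟨k, hk, rfl⟩ := Finset.mem_image.mp hp
      simp only [Finset.mem_range]
      have : S k ≤ S n := hSmono' k n (by simp at hk; omega)
      rw [hSN] at this
      omega
    · intro p hp hpn
      rw [hfdef]
      simp only []
      rw [if_neg]
      intro hv
      obtain ⟨k, hk, hkp⟩ := (hvalley p (Finset.mem_range.mp hp)).mp hv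
      exact hpn (Finset.mem_image.mpr
        ⟨k, Finset.mem_range.mpr (show k < n + 1 by omega), hkp⟩)
  -- identify the left factors
  have hleft : ∀ k, k ≤ n →
      Omega' (if k = 0 then [] else pairList i j (List.range (k-1)) ++ [i (k-1), j (k-1) - 1])
      = (C2 (S k) w : ℝ) / (Nat.factorial (S k)) := by
    intro k hk
    by_cases hk0 : k = 0
    · rw [if_pos hk0, Omega'_nil, hk0]
      rw [show S 0 = 0 by simp [hSdef]]
      rw [C2_zero]
      simp
    · rw [if_neg hk0]
      have hk1 : k - 1 < n := by omega
      have hik := hi (k-1) hk1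
      have hjk := hj (k-1) hk1
      have hs := hSstep (k-1)
      rw [show k - 1 + 1 = k by omega] at hs
      set L := pairList i j (List.range (k-1)) ++ [i (k-1), j (k-1) - 1] with hL
      have hLsum : L.sum = S k - 1 := by
        rw [hL, List.sum_append, hSval]
        simp
        omega
      have hOL : Omega L = C2 (S k) w := by
        rw [Omega_eq, show L.sum + 1 = S k by omega]
        apply C2_congr
        intro q hq
        have hq' : q < S (k-1) + (i (k-1) + j (k-1) - 1) := by omega
        show wd L q = wd a q
        unfold wd
        rw [hdecomp (k-1) hk1, hL]
        by_cases hql : q < S (k-1)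
        · rw [blk_append_left _ _ _ (by rw [hSval]; exact hql),
            blk_append_left _ _ _ (by rw [hSval]; exact hql)]
        · set t := q - S (k-1) with htd
          have hqt : q = (pairList i j (List.range (k-1))).sum + t := by
            rw [hSval]; omega
          rw [hqt, blk_append_right, blk_append_right]
          have ht2 : t < i (k-1) + j (k-1) - 1 := by omega
          congr 2
          by_cases hti : t < i (k-1)
          · simp [blk, hti]
          · have h1 : t - i (k-1) < j (k-1) - 1 := by omega
            have h2 : t - i (k-1) < j (k-1) := by omega
            simp [blk, hti, h1, h2]
      rw [Omega', hOL, show L.sum + 1 = S k by omega]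
  -- identify the right factors
  have hright : ∀ k, k ≤ n →
      Omega' (if k = n then [] else (i k - 1) :: j k :: pairList i j ((List.range n).drop (k+1)))
      = (C2 (N - S k) (shiftw w (S k)) : ℝ) / (Nat.factorial (N - S k)) := by
    intro k hk
    by_cases hkn : k = n
    · rw [if_pos hkn, Omega'_nil, hkn]
      rw [show N - S n = 0 by rw [hSN]; omega]
      rw [C2_zero]
      simp
    · rw [if_neg hkn]
      have hkn' : k < n := by omega
      have hik := hi k hkn'
      set R := (i k - 1) :: j k :: pairList i j ((List.range n).drop (k+1)) with hR
      have hsplit : N = S k + (i k + j k + (pairList i j ((List.range n).drop (k+1))).sum) := by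
        have h1 := congrArg List.sum (hdecomp k hkn')
        rw [List.sum_append, List.sum_cons, List.sum_cons] at h1
        simp only [hSval] at h1
        omega
      have hRsum : R.sum = N - S k - 1 := by
        rw [hR, List.sum_cons, List.sum_cons]
        omega
      have hNSk : S k + 1 ≤ N := by omega
      have hOR : Omega R = C2 (N - S k) (shiftw w (S k)) := by
        rw [Omega_eq, show R.sum + 1 = N - S k by omega]
        apply C2_congr
        intro q hq
        show wd R q = shiftw w (S k) q
        have hrhs : shiftw w (S k) q = wd a (q + S k + 1) := rfl
        rw [hrhs]
        unfold wd
        rw [hdecomp k hkn', hR]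
        rw [show q + S k + 1 = (pairList i j (List.range k)).sum + (1 + q) by
          rw [hSval]; omega]
        rw [blk_append_right, pairList_length_range]
        have hkey : blk ((i k - 1) :: j k :: pairList i j ((List.range n).drop (k+1))) q
            = blk (i k :: j k :: pairList i j ((List.range n).drop (k+1))) (1 + q) := by
          show (if q < i k - 1 then 0 else _) = (if 1 + q < i k then 0 else _)
          by_cases hqi : q < i k - 1
          · rw [if_pos hqi, if_pos (by omega)]
          · rw [if_neg hqi, if_neg (by omega)]
            congr 2
            omega
        rw [hkey]
        have hmod : ∀ b : ℕ, (2 * k + b) % 2 = b % 2 := by intro b; omega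
        rw [hmod]
      rw [Omega', hOR, show R.sum + 1 = N - S k by omega]
  -- final assembly
  have hLHS : Omega' a = (C2 (N+1) w : ℝ) / (Nat.factorial (N+1)) := by
    rw [Omega', Omega_eq, haSum]
  rw [hLHS, hC2]
  have hcast : ((∑ p ∈ Finset.range (N+1), f p : ℕ) : ℝ)
      = ∑ k ∈ Finset.range (n+1), (f (S k) : ℝ) := by
    rw [himg]
    push_cast
    rfl
  rw [hcast, Finset.sum_div, Finset.mul_sum]
  apply Finset.sum_congr rfl
  intro k hk
  have hkn : k ≤ n := by
    have := Finset.mem_range.mp hk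
    omega
  have hSkN : S k ≤ N := by
    have := hSmono' k n hkn
    rw [hSN] at this
    exact this
  have hfSk : f (S k) = N.choose (S k) * (C2 (S k) w * C2 (N - S k) (shiftw w (S k))) := by
    rw [hfdef]
    simp only []
    rw [if_pos ((hvalley (S k) (by omega)).mpr ⟨k, hkn, rfl⟩)]
  rw [hfSk, hleft k hkn, hright k hkn]
  exact arith_key N (S k) hSkN (C2 (S k) w) (C2 (N - S k) (shiftw w (S k)))
end

section
/- For every positive integer k, the conditional probability of the event {X₀ > X₁ > ⋯ > X_k and X_k < X_{k+1}} given the event {X₋₁ < X₀ and X₀ > X₁} equals 3(k² + 3k + 1)/(k+3)!. (In the language of the paper: if 0 is a local maximum point and μ₀ is the distance from 0 to the next local minimum point, then P{μ₀ = k} = 3(k² + 3k + 1)/(k+3)!.) -/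
open MeasureTheory ProbabilityTheory Set Function
open scoped ENNReal

lemma mp_comp {n : ℕ} (ν : Measure ℝ) [IsProbabilityMeasure ν] (σ : Equiv.Perm (Fin n)) :
    MeasurePreserving (fun x : Fin n → ℝ => x ∘ σ) (Measure.pi fun _ => ν)
      (Measure.pi fun _ => ν) := by
  have hm : Measurable (fun x : Fin n → ℝ => x ∘ σ) :=
    measurable_pi_lambda _ fun i => measurable_pi_apply _
  refine ⟨hm, ?_⟩
  refine (Measure.pi_eq (μ := fun _ => ν) fun s hs => ?_).symm
  rw [Measure.map_apply hm (MeasurableSet.univ_pi hs)]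
  have hpre : (fun x : Fin n → ℝ => x ∘ σ) ⁻¹' (univ.pi s) = univ.pi fun i => s (σ.symm i) := by
    ext x
    simp only [mem_preimage, mem_pi, mem_univ, forall_true_left, comp_apply, true_implies]
    constructor
    · intro h j; simpa using h (σ.symm j)
    · intro h i; simpa using h (σ i)
  rw [hpre, Measure.pi_pi]
  simpa using Equiv.prod_comp σ.symm fun i => ν (s i)

lemma meas_SA {n : ℕ} : MeasurableSet {x : Fin n → ℝ | StrictAnti x} := by
  have : {x : Fin n → ℝ | StrictAnti x} =
      ⋂ (i : Fin n) (j : Fin n), {x | i < j → x j < x i} := by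
    ext x; simp [StrictAnti, Set.mem_iInter]
  rw [this]
  refine MeasurableSet.iInter fun i => MeasurableSet.iInter fun j => ?_
  by_cases h : i < j
  · simp only [h, true_implies]
    exact measurableSet_lt (measurable_pi_apply _) (measurable_pi_apply _)
  · simp only [h, false_implies]; simp

lemma exists_perm_strictAnti {n : ℕ} (x : Fin n → ℝ) (hx : Function.Injective x) :
    ∃ σ : Equiv.Perm (Fin n), StrictAnti (x ∘ σ) := by
  refine ⟨(Fin.revPerm).trans (Tuple.sort x), ?_⟩
  have hmono : Monotone (x ∘ Tuple.sort x) := Tuple.monotone_sort x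
  have hsm : StrictMono (x ∘ Tuple.sort x) :=
    hmono.strictMono_of_injective (hx.comp (Tuple.sort x).injective)
  have hrev : StrictAnti (Fin.revPerm : Fin n → Fin n) := fun i j h => by
    simpa using Fin.rev_lt_rev.mpr h
  have := hsm.comp_strictAnti hrev
  convert this using 1
  rfl

lemma SA_unique {n : ℕ} {x : Fin n → ℝ} {σ τ : Equiv.Perm (Fin n)}
    (hσ : StrictAnti (x ∘ σ)) (hτ : StrictAnti (x ∘ τ)) : σ = τ := by
  have hinj : Function.Injective x := by
    intro a b h
    have h2 : (x ∘ σ) (σ.symm a) = (x ∘ σ) (σ.symm b) := by simpa using h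
    have := hσ.injective h2
    simpa using congrArg σ this
  have hr : range (x ∘ σ) = range (x ∘ τ) := by
    rw [σ.surjective.range_comp, τ.surjective.range_comp]
  have := (StrictAnti.range_inj hσ hτ).mp hr
  exact Equiv.ext fun i => hinj (congrFun this i)

lemma pi_SA (ν : Measure ℝ) [IsProbabilityMeasure ν] (n : ℕ)
    (hdiag : ∀ i j : Fin n, i ≠ j → (Measure.pi fun _ : Fin n => ν) {x | x i = x j} = 0) :
    (Measure.pi fun _ : Fin n => ν) {x | StrictAnti x} = ((n.factorial : ℝ≥0∞))⁻¹ := by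
  set P := (Measure.pi fun _ : Fin n => ν) with hPdef
  set E : Equiv.Perm (Fin n) → Set (Fin n → ℝ) := fun σ => {x | StrictAnti (x ∘ σ)} with hE
  have hm : ∀ σ : Equiv.Perm (Fin n), Measurable (fun x : Fin n → ℝ => x ∘ σ) :=
    fun σ => measurable_pi_lambda _ fun i => measurable_pi_apply _
  have hEmeas : ∀ σ, MeasurableSet (E σ) := fun σ => (hm σ) meas_SA
  have hEone : E 1 = {x | StrictAnti x} := by
    ext x; simp [hE]
  have hEμ : ∀ σ, P (E σ) = P (E 1) := by
    intro σ
    have h1 : E σ = (fun x : Fin n → ℝ => x ∘ σ) ⁻¹' {x | StrictAnti x} := rfl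
    rw [h1, (mp_comp ν σ).measure_preimage meas_SA.nullMeasurableSet, hEone]
  have hdisj : Pairwise (Function.onFun Disjoint E) := by
    intro σ τ hστ
    refine Set.disjoint_left.mpr fun x hxσ hxτ => hστ (SA_unique hxσ hxτ)
  have hsum : P (⋃ σ, E σ) = (n.factorial : ℝ≥0∞) * P (E 1) := by
    rw [measure_iUnion hdisj hEmeas, tsum_fintype]
    simp only [hEμ]
    rw [Finset.sum_const, Finset.card_univ, Fintype.card_perm, nsmul_eq_mul]
    simp
  have hcover : P (⋃ σ, E σ) = 1 := by
    rw [← prob_compl_eq_zero_iff (MeasurableSet.iUnion hEmeas)]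
    set S : Fin n → Fin n → Set (Fin n → ℝ) := fun i j => {x | i ≠ j ∧ x i = x j} with hS
    refine measure_mono_null (t := ⋃ i, ⋃ j, S i j) ?_ (measure_iUnion_null fun i : Fin n =>
      measure_iUnion_null fun j : Fin n => ?_)
    · intro x hx
      simp only [mem_compl_iff, mem_iUnion, not_exists] at hx
      have hninj : ¬ Function.Injective x := by
        intro hinj
        obtain ⟨σ, hσ⟩ := exists_perm_strictAnti x hinj
        exact hx σ hσ
      simp only [Function.Injective, not_forall] at hninj
      obtain ⟨i, j, hxij, hij⟩ := hninj
      refine mem_iUnion.mpr ⟨i, mem_iUnion.mpr ⟨j, ?_⟩⟩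
      exact ⟨hij, hxij⟩
    · by_cases h : i = j
      · subst h
        have : S i i = ∅ := by ext x; simp [hS]
        simp [this]
      · exact measure_mono_null (fun x hx => hx.2) (hdiag i j h)
  have hne : (n.factorial : ℝ≥0∞) ≠ 0 := by
    simp [Nat.factorial_ne_zero]
  have hnt : (n.factorial : ℝ≥0∞) ≠ ⊤ := by simp
  rw [← hEone]
  calc P (E 1) = (n.factorial : ℝ≥0∞)⁻¹ * ((n.factorial : ℝ≥0∞) * P (E 1)) := by
        rw [← mul_assoc, ENNReal.inv_mul_cancel hne hnt, one_mul]
    _ = (n.factorial : ℝ≥0∞)⁻¹ := by rw [← hsum, hcover, mul_one]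

section Omega

variable {α : Type*} [MeasurableSpace α] (μ : Measure α) [IsProbabilityMeasure μ]
    (X : ℤ → α → ℝ) (hmeas : ∀ t, Measurable (X t))
    (hindep : iIndepFun X μ)
    (hident : ∀ t, Measure.map (X t) μ = Measure.map (X 0) μ)
    (hatomless : ∀ c : ℝ, Measure.map (X 0) μ {c} = 0)

include hmeas hindep hident hatomless

lemma tie_null (s u : ℤ) (h : s ≠ u) : μ {ω | X s ω = X u ω} = 0 := by
  have hi : IndepFun (X s) (X u) μ := hindep.indepFun h
  have hmap : μ.map (fun ω => (X s ω, X u ω)) = (μ.map (X s)).prod (μ.map (X u)) :=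
    (indepFun_iff_map_prod_eq_prod_map_map (hmeas s).aemeasurable (hmeas u).aemeasurable).mp hi
  have hD : MeasurableSet {p : ℝ × ℝ | p.1 = p.2} :=
    measurableSet_eq_fun measurable_fst measurable_snd
  have h2 : μ {ω | X s ω = X u ω} = ((μ.map (X s)).prod (μ.map (X u))) {p | p.1 = p.2} := by
    rw [← hmap, Measure.map_apply ((hmeas s).prodMk (hmeas u)) hD]
    rfl
  rw [h2, hident s, hident u, Measure.prod_apply hD]
  have h3 : ∀ x : ℝ, (Prod.mk x ⁻¹' {p : ℝ × ℝ | p.1 = p.2}) = {x} := by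
    intro x; ext y; simp [eq_comm]
  simp [h3, hatomless]

lemma precomp_indep {n : ℕ} (t : Fin n → ℤ) (ht : Function.Injective t) :
    iIndepFun (fun i => X (t i)) μ := by
  classical
  rw [iIndepFun_iff]
  intro s f' hf'
  set F : ℤ → Set α := fun z => ⋂ j ∈ s.filter (fun j => t j = z), f' j with hF
  have hkey : ∀ j ∈ s, F (t j) = f' j := by
    intro j hj
    have hfil : s.filter (fun j' => t j' = t j) = {j} := by
      ext a
      simp only [Finset.mem_filter, Finset.mem_singleton]
      constructor
      · rintro ⟨ha, h⟩; exact ht h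
      · rintro rfl; exact ⟨hj, rfl⟩
    show (⋂ j' ∈ s.filter (fun j' => t j' = t j), f' j') = f' j
    rw [hfil]
    simp
  have h1 : (⋂ j ∈ s, f' j) = ⋂ z ∈ s.image t, F z := by
    ext x
    simp only [Set.mem_iInter, Finset.mem_image, hF, Finset.mem_filter]
    constructor
    · rintro h z ⟨j', hj', rfl⟩ j ⟨hj, _⟩
      exact h j hj
    · intro h j hj
      exact h (t j) ⟨j, hj, rfl⟩ j ⟨hj, rfl⟩
  have h2 : μ (⋂ z ∈ s.image t, F z) = ∏ z ∈ s.image t, μ (F z) := by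
    refine hindep.meas_biInter fun z hz => ?_
    obtain ⟨j, hj, rfl⟩ := Finset.mem_image.mp hz
    rw [hkey j hj]
    exact hf' j hj
  rw [h1, h2, Finset.prod_image (fun a ha b hb hab => ht hab)]
  exact Finset.prod_congr rfl fun j hj => by rw [hkey j hj]

lemma map_pi {n : ℕ} (t : Fin n → ℤ) (ht : Function.Injective t) :
    μ.map (fun ω (i : Fin n) => X (t i) ω) = Measure.pi (fun _ => μ.map (X 0)) := by
  have hYm : Measurable (fun ω (i : Fin n) => X (t i) ω) :=
    measurable_pi_lambda _ fun i => hmeas _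
  refine ((Measure.pi_eq fun s hs => ?_)).symm
  rw [Measure.map_apply hYm (MeasurableSet.univ_pi hs)]
  have hpre : (fun ω (i : Fin n) => X (t i) ω) ⁻¹' (univ.pi s) = ⋂ i, X (t i) ⁻¹' s i := by
    ext ω; simp [Set.mem_pi]
  rw [hpre, (precomp_indep μ X hmeas hindep hident hatomless t ht).meas_iInter
    (fun i => ⟨s i, hs i, rfl⟩)]
  exact Finset.prod_congr rfl fun i _ => by
    rw [← hident (t i), Measure.map_apply (hmeas (t i)) (hs i)]

lemma chainProbFin {n : ℕ} (t : Fin n → ℤ) (ht : Function.Injective t) :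
    μ {ω | StrictAnti fun i => X (t i) ω} = ((n.factorial : ℝ≥0∞))⁻¹ := by
  have hYm : Measurable (fun ω (i : Fin n) => X (t i) ω) :=
    measurable_pi_lambda _ fun i => hmeas _
  have hmapY := map_pi μ X hmeas hindep hident hatomless t ht
  haveI : IsProbabilityMeasure (μ.map (X 0)) := Measure.isProbabilityMeasure_map (hmeas 0).aemeasurable
  have hdiag : ∀ i j : Fin n, i ≠ j →
      (Measure.pi fun _ : Fin n => μ.map (X 0)) {x | x i = x j} = 0 := by
    intro i j hij
    rw [← hmapY, Measure.map_apply hYm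
      (measurableSet_eq_fun (measurable_pi_apply i) (measurable_pi_apply j))]
    exact tie_null μ X hmeas hindep hident hatomless (t i) (t j) fun h => hij (ht h)
  have hSA := pi_SA (μ.map (X 0)) n hdiag
  rw [← hSA, ← hmapY, Measure.map_apply hYm meas_SA]
  rfl

end Omega

lemma adj_to_all (f : ℕ → ℝ) (n : ℕ) (hf : ∀ m, m + 1 < n → f (m + 1) < f m) :
    ∀ i j : ℕ, i < j → j < n → f j < f i := by
  intro i j hij hjn
  induction j with
  | zero => omega
  | succ j ih =>
    rcases Nat.lt_succ_iff_lt_or_eq.mp hij with h | h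
    · exact (hf j hjn).trans (ih h (by omega))
    · subst h; exact hf i hjn

section Omega2

variable {α : Type*} [MeasurableSpace α] (μ : Measure α) [IsProbabilityMeasure μ]
    (X : ℤ → α → ℝ) (hmeas : ∀ t, Measurable (X t))
    (hindep : iIndepFun X μ)
    (hident : ∀ t, Measure.map (X t) μ = Measure.map (X 0) μ)
    (hatomless : ∀ c : ℝ, Measure.map (X 0) μ {c} = 0)

def CSet (n : ℕ) (g : ℕ → ℤ) : Set α :=
  {ω | ∀ m : ℕ, m + 1 < n → X (g (m + 1)) ω < X (g m) ω}

include hmeas hindep hident hatomless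

lemma chainProb (g : ℕ → ℤ) (n : ℕ) (hg : ∀ i j, i < n → j < n → g i = g j → i = j) :
    μ (CSet X n g) = ((n.factorial : ℝ≥0∞))⁻¹ := by
  have ht : Function.Injective (fun i : Fin n => g i.val) := fun a b h =>
    Fin.ext (hg a.val b.val a.isLt b.isLt h)
  rw [← chainProbFin μ X hmeas hindep hident hatomless _ ht]
  congr 1
  ext ω
  simp only [CSet, Set.mem_setOf_eq]
  constructor
  · intro h i j hij
    exact adj_to_all (fun m => X (g m) ω) n h i.val j.val hij j.isLt
  · intro h m hm
    exact h (a := ⟨m, by omega⟩) (b := ⟨m + 1, hm⟩) (by simp [Fin.lt_def])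

lemma split_lem (S : Set α) (s u : ℤ) (hsu : s ≠ u) :
    μ S = μ (S ∩ {ω | X u ω < X s ω}) + μ (S ∩ {ω | X s ω < X u ω}) := by
  have hT : MeasurableSet {ω | X u ω < X s ω} := measurableSet_lt (hmeas u) (hmeas s)
  have hmain := measure_inter_add_diff (μ := μ) S hT
  have heq : μ (S \ {ω | X u ω < X s ω}) = μ (S ∩ {ω | X s ω < X u ω}) := by
    apply le_antisymm
    · have hsub : S \ {ω | X u ω < X s ω} ⊆
          (S ∩ {ω | X s ω < X u ω}) ∪ {ω | X s ω = X u ω} := by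
        rintro ω ⟨h1, h2⟩
        simp only [Set.mem_setOf_eq, Set.mem_union, Set.mem_inter_iff] at *
        rcases lt_trichotomy (X s ω) (X u ω) with h | h | h
        · exact Or.inl ⟨h1, h⟩
        · exact Or.inr h
        · exact absurd h h2
      calc μ (S \ {ω | X u ω < X s ω})
          ≤ μ (S ∩ {ω | X s ω < X u ω}) + μ {ω | X s ω = X u ω} :=
            le_trans (measure_mono hsub) (measure_union_le _ _)
        _ = μ (S ∩ {ω | X s ω < X u ω}) := by
            rw [tie_null μ X hmeas hindep hident hatomless s u hsu, add_zero]
    · refine measure_mono ?_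
      rintro ω ⟨h1, h2⟩
      refine ⟨h1, ?_⟩
      simp only [Set.mem_setOf_eq] at h2 ⊢
      exact lt_asymm h2
  rw [← hmain, heq]

end Omega2

lemma inj3a : ∀ i j : ℕ, i < 3 → j < 3 →
    ((if i = 0 then (0:ℤ) else if i = 1 then 1 else -1) =
      (if j = 0 then (0:ℤ) else if j = 1 then 1 else -1)) → i = j := by
  intro i j hi hj
  interval_cases i <;> interval_cases j <;> decide

lemma inj3b : ∀ i j : ℕ, i < 3 → j < 3 →
    ((if i = 0 then (0:ℤ) else if i = 1 then -1 else 1) =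
      (if j = 0 then (0:ℤ) else if j = 1 then -1 else 1)) → i = j := by
  intro i j hi hj
  interval_cases i <;> interval_cases j <;> decide

lemma Ninv (n : ℕ) : ((n.factorial : ℝ≥0∞))⁻¹ = ENNReal.ofReal ((n.factorial : ℝ))⁻¹ := by
  rw [ENNReal.ofReal_inv_of_pos (by positivity), ENNReal.ofReal_natCast]

lemma real_id (k : ℕ) :
    (((k:ℝ)^2 + 3*k + 1) / ((k+3).factorial : ℝ) +
      (((k+2).factorial : ℝ)⁻¹ + ((k+2).factorial : ℝ)⁻¹)) =
    ((k+1).factorial : ℝ)⁻¹ + ((k+3).factorial : ℝ)⁻¹ := by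
  have h2 : ((k+2).factorial : ℝ) = (k+2) * (k+1).factorial := by
    rw [show k+2 = (k+1)+1 from rfl, Nat.factorial_succ]
    push_cast
    ring
  have h3 : ((k+3).factorial : ℝ) = ((k:ℝ)+3) * ((k+2).factorial : ℝ) := by
    rw [show k+3 = (k+2)+1 from rfl, Nat.factorial_succ]
    push_cast
    ring
  have p1 : ((k+1).factorial : ℝ) ≠ 0 := by positivity
  have p2 : ((k:ℝ)+2) ≠ 0 := by positivity
  have p3 : ((k:ℝ)+3) ≠ 0 := by positivity
  rw [h3, h2]
  field_simp
  ring

lemma enn_id (k : ℕ) :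
    ENNReal.ofReal (((k:ℝ)^2 + 3*k + 1) / ((k+3).factorial : ℝ)) +
      (((k+2).factorial : ℝ≥0∞)⁻¹ + ((k+2).factorial : ℝ≥0∞)⁻¹) =
    ((k+1).factorial : ℝ≥0∞)⁻¹ + ((k+3).factorial : ℝ≥0∞)⁻¹ := by
  rw [Ninv, Ninv, Ninv, ← ENNReal.ofReal_add (by positivity) (by positivity),
    ← ENNReal.ofReal_add (by positivity) (by positivity),
    ← ENNReal.ofReal_add (by positivity) (by positivity)]
  exact congrArg _ (real_id k)

open MeasureTheory ProbabilityTheory in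
theorem stmt_12
    {α : Type*} [MeasurableSpace α] (μ : Measure α) [IsProbabilityMeasure μ]
    (X : ℤ → α → ℝ) (hmeas : ∀ t, Measurable (X t))
    (hindep : iIndepFun X μ)
    (hident : ∀ t, Measure.map (X t) μ = Measure.map (X 0) μ)
    (hatomless : ∀ c : ℝ, Measure.map (X 0) μ {c} = 0)
    (k : ℕ) (hk : 0 < k) :
    (μ[|{ω | X (-1) ω < X 0 ω ∧ X 1 ω < X 0 ω}])
        {ω | (∀ m : ℕ, m < k → X ((m : ℤ) + 1) ω < X (m : ℤ) ω) ∧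
          X (k : ℤ) ω < X ((k : ℤ) + 1) ω} =
      ENNReal.ofReal (3 * ((k : ℝ) ^ 2 + 3 * k + 1) / Nat.factorial (k + 3)) := by
  classical
  have cp := chainProb μ X hmeas hindep hident hatomless
  have sl := split_lem μ X hmeas hindep hident hatomless
  set B : Set α := {ω | X (-1) ω < X 0 ω ∧ X 1 ω < X 0 ω} with hBdef
  set A : Set α := {ω | (∀ m : ℕ, m < k → X ((m : ℤ) + 1) ω < X (m : ℤ) ω) ∧
      X (k : ℤ) ω < X ((k : ℤ) + 1) ω} with hAdef
  have hBmeas : MeasurableSet B := by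
    have : B = {ω | X (-1) ω < X 0 ω} ∩ {ω | X 1 ω < X 0 ω} := rfl
    rw [this]
    exact (measurableSet_lt (hmeas _) (hmeas _)).inter (measurableSet_lt (hmeas _) (hmeas _))
  rw [ProbabilityTheory.cond_apply hBmeas μ]
  set C1 : Set α := CSet X (k+1) (fun m => (m:ℤ)) with hC1def
  set C2 : Set α := CSet X (k+2) (fun m => (m:ℤ)) with hC2def
  set C3 : Set α := CSet X (k+2) (fun m => (m:ℤ) - 1) with hC3def
  set C4 : Set α := CSet X (k+3) (fun m => (m:ℤ) - 1) with hC4def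
  set D : Set α := {ω | X (k:ℤ) ω < X ((k:ℤ)+1) ω} with hDdef
  set W : Set α := {ω | X (-1) ω < X 0 ω} with hWdef
  set V : Set α := {ω | X 0 ω < X (-1) ω} with hVdef
  -- chain probabilities
  have hC1 : μ C1 = (((k+1).factorial : ℝ≥0∞))⁻¹ :=
    cp _ (k+1) (fun i j _ _ h => by exact_mod_cast h)
  have hC2 : μ C2 = (((k+2).factorial : ℝ≥0∞))⁻¹ :=
    cp _ (k+2) (fun i j _ _ h => by omega)
  have hC3 : μ C3 = (((k+2).factorial : ℝ≥0∞))⁻¹ :=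
    cp _ (k+2) (fun i j _ _ h => by omega)
  have hC4 : μ C4 = (((k+3).factorial : ℝ≥0∞))⁻¹ :=
    cp _ (k+3) (fun i j _ _ h => by omega)
  -- set identities
  have E1 : C1 ∩ {ω | X ((k:ℤ)+1) ω < X (k:ℤ) ω} = C2 := by
    ext ω
    simp only [hC1def, hC2def, CSet, Set.mem_inter_iff, Set.mem_setOf_eq]
    constructor
    · rintro ⟨h1, h2⟩ m hm
      rcases Nat.lt_or_ge (m+1) (k+1) with h | h
      · exact h1 m h
      · have hmk : m = k := by omega
        subst hmk
        push_cast
        exact h2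
    · intro h
      refine ⟨fun m hm => h m (by omega), ?_⟩
      have := h k (by omega)
      push_cast at this
      exact this
  have E3 : C3 ∩ {ω | X ((k:ℤ)+1) ω < X (k:ℤ) ω} = C4 := by
    ext ω
    simp only [hC3def, hC4def, CSet, Set.mem_inter_iff, Set.mem_setOf_eq]
    constructor
    · rintro ⟨h1, h2⟩ m hm
      rcases Nat.lt_or_ge (m+1) (k+2) with h | h
      · exact h1 m h
      · have hmk : m = k+1 := by omega
        subst hmk
        have e1 : ((k:ℤ)+1+1) - 1 = (k:ℤ)+1 := by ring
        have e2 : ((k:ℤ)+1) - 1 = (k:ℤ) := by ring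
        push_cast
        rw [e1, e2]
        exact h2
    · intro h
      refine ⟨fun m hm => h m (by omega), ?_⟩
      have := h (k+1) (by omega)
      push_cast at this
      have e1 : ((k:ℤ)+1+1) - 1 = (k:ℤ)+1 := by ring
      have e2 : ((k:ℤ)+1) - 1 = (k:ℤ) := by ring
      rw [e1, e2] at this
      exact this
  have E2 : (C1 ∩ D) ∩ V = C3 ∩ D := by
    have hCV : C1 ∩ V = C3 := by
      ext ω
      simp only [hC1def, hC3def, hVdef, CSet, Set.mem_inter_iff, Set.mem_setOf_eq]
      constructor
      · rintro ⟨h1, h2⟩ m hm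
        cases m with
        | zero => simpa using h2
        | succ m' =>
          have := h1 m' (by omega)
          push_cast
          have e1 : ((m':ℤ)+1+1) - 1 = (m':ℤ)+1 := by ring
          have e2 : ((m':ℤ)+1) - 1 = (m':ℤ) := by ring
          rw [e1, e2]
          push_cast at this
          exact this
      · intro h
        constructor
        · intro m hm
          have := h (m+1) (by omega)
          push_cast at this ⊢
          have e1 : ((m:ℤ)+1+1) - 1 = (m:ℤ)+1 := by ring
          have e2 : ((m:ℤ)+1) - 1 = (m:ℤ) := by ring
          rw [e1, e2] at this
          exact this
        · have := h 0 (by omega)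
          simpa using this
    rw [Set.inter_right_comm, hCV]
  have hBA : B ∩ A = (C1 ∩ D) ∩ W := by
    ext ω
    simp only [hBdef, hAdef, hC1def, hDdef, hWdef, CSet, Set.mem_inter_iff, Set.mem_setOf_eq]
    constructor
    · rintro ⟨⟨hw, h10⟩, ⟨hchain, hd⟩⟩
      refine ⟨⟨fun m hm => ?_, hd⟩, hw⟩
      push_cast
      exact hchain m (by omega)
    · rintro ⟨⟨hchain, hd⟩, hw⟩
      have h10 : X 1 ω < X 0 ω := by
        have := hchain 0 (by omega)
        simpa using this
      exact ⟨⟨hw, h10⟩, ⟨fun m hm => by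
        have := hchain m (by omega)
        push_cast at this
        exact this, hd⟩⟩
  -- split equations
  have s1 : μ C1 = μ (C1 ∩ D) + μ C2 := by
    have := sl C1 ((k:ℤ)+1) (k:ℤ) (by omega)
    rwa [E1] at this
  have s3 : μ C3 = μ (C3 ∩ D) + μ C4 := by
    have := sl C3 ((k:ℤ)+1) (k:ℤ) (by omega)
    rwa [E3] at this
  have s2 : μ (C1 ∩ D) = μ ((C1 ∩ D) ∩ W) + μ (C3 ∩ D) := by
    have := sl (C1 ∩ D) 0 (-1) (by omega)
    rwa [E2] at this
  -- value of μ B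
  have hB3 : μ B = (3 : ℝ≥0∞)⁻¹ := by
    have sB := sl B 1 (-1) (by omega)
    have EB1 : B ∩ {ω | X (-1) ω < X 1 ω} =
        CSet X 3 (fun m => if m = 0 then 0 else if m = 1 then 1 else -1) := by
      ext ω
      simp only [hBdef, CSet, Set.mem_inter_iff, Set.mem_setOf_eq]
      constructor
      · rintro ⟨⟨hw, h10⟩, h⟩ m hm
        rcases (by omega : m = 0 ∨ m = 1) with rfl | rfl
        · simpa using h10
        · simpa using h
      · intro h
        have h0 := h 0 (by omega)
        have h1 := h 1 (by omega)
        norm_num at h0 h1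
        exact ⟨⟨h1.trans h0, h0⟩, h1⟩
    have EB2 : B ∩ {ω | X 1 ω < X (-1) ω} =
        CSet X 3 (fun m => if m = 0 then 0 else if m = 1 then -1 else 1) := by
      ext ω
      simp only [hBdef, CSet, Set.mem_inter_iff, Set.mem_setOf_eq]
      constructor
      · rintro ⟨⟨hw, h10⟩, h⟩ m hm
        rcases (by omega : m = 0 ∨ m = 1) with rfl | rfl
        · simpa using hw
        · simpa using h
      · intro h
        have h0 := h 0 (by omega)
        have h1 := h 1 (by omega)
        norm_num at h0 h1
        exact ⟨⟨h0, h1.trans h0⟩, h1⟩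
    have v1 : μ (CSet X 3 (fun m => if m = 0 then 0 else if m = 1 then 1 else -1))
        = ((6 : ℝ≥0∞))⁻¹ := by
      have h := cp (fun m => if m = 0 then 0 else if m = 1 then 1 else -1) 3 inj3a
      norm_num [Nat.factorial] at h
      exact h
    have v2 : μ (CSet X 3 (fun m => if m = 0 then 0 else if m = 1 then -1 else 1))
        = ((6 : ℝ≥0∞))⁻¹ := by
      have h := cp (fun m => if m = 0 then 0 else if m = 1 then -1 else 1) 3 inj3b
      norm_num [Nat.factorial] at h
      exact h
    rw [sB, EB1, EB2, v1, v2]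
    rw [← two_mul, show (6:ℝ≥0∞) = 2*3 by norm_num,
      ENNReal.mul_inv (by simp) (by simp), ← mul_assoc,
      ENNReal.mul_inv_cancel (by norm_num) (by norm_num), one_mul]
  -- key linear relation
  have key : μ (B ∩ A) + (((k+2).factorial : ℝ≥0∞)⁻¹ + ((k+2).factorial : ℝ≥0∞)⁻¹)
      = ((k+1).factorial : ℝ≥0∞)⁻¹ + ((k+3).factorial : ℝ≥0∞)⁻¹ := by
    have key0 : μ ((C1 ∩ D) ∩ W) + μ C3 + μ C2 = μ C1 + μ C4 := by
      rw [s3, s1, s2]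
      ring
    rw [hC1, hC2, hC3, hC4] at key0
    rw [hBA]
    calc μ ((C1 ∩ D) ∩ W) + (((k+2).factorial : ℝ≥0∞)⁻¹ + ((k+2).factorial : ℝ≥0∞)⁻¹)
        = μ ((C1 ∩ D) ∩ W) + ((k+2).factorial : ℝ≥0∞)⁻¹ + ((k+2).factorial : ℝ≥0∞)⁻¹ := by
          ring
      _ = ((k+1).factorial : ℝ≥0∞)⁻¹ + ((k+3).factorial : ℝ≥0∞)⁻¹ := key0
  have hc : (((k+2).factorial : ℝ≥0∞)⁻¹ + ((k+2).factorial : ℝ≥0∞)⁻¹) ≠ ⊤ := by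
    refine ENNReal.add_ne_top.mpr ⟨?_, ?_⟩ <;>
      exact ENNReal.inv_ne_top.mpr (by simp [Nat.factorial_ne_zero])
  have hBAval : μ (B ∩ A) = ENNReal.ofReal (((k:ℝ)^2 + 3*k + 1) / ((k+3).factorial : ℝ)) := by
    have h2 := key.trans (enn_id k).symm
    exact (ENNReal.add_left_inj hc).mp h2
  rw [hB3, inv_inv, hBAval]
  rw [show (3:ℝ≥0∞) = ENNReal.ofReal (3:ℝ) from (ENNReal.ofReal_ofNat 3).symm,
    ← ENNReal.ofReal_mul (by norm_num)]
  congr 1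
  ring
end

section
/- Let n ∈ ℕ and k₀, …, kₙ be positive integers. Set T₀ := 0 and T_{j+1} := T_j + k_j for j = 0,…,n. Consider the event A: X₋₁ < X₀; for every even j ∈ {0,…,n}, X_{T_j} > X_{T_j+1} > ⋯ > X_{T_{j+1}}; for every odd j ∈ {0,…,n}, X_{T_j} < X_{T_j+1} < ⋯ < X_{T_{j+1}}; and finally X_{T_{n+1}} < X_{T_{n+1}+1} if n is even, X_{T_{n+1}} > X_{T_{n+1}+1} if n is odd. Then the conditional probability of A given the event {X₋₁ < X₀ and X₀ > X₁} equals 3·Ω'(1, k₀, k₁, …, kₙ, 1). (In the language of the paper: P{μ₀ = k₀, …, μₙ = kₙ} = 3·Ω'(1, k₀, …, kₙ, 1), where μ₀, μ₁, … are the successive distances between consecutive local extrema starting from the local maximum at 0.) -/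
open MeasureTheory ProbabilityTheory
open scoped ENNReal

namespace Stmt13Aux

/-- Real-valued version of the monotonicity condition. -/
def MonotCondR (a : List ℕ) (x : Fin (a.sum + 1) → ℝ) : Prop :=
  ∀ k, k < a.length →
    ∀ j, (a.take k).sum ≤ j → j < (a.take (k + 1)).sum →
      ∀ h : j + 1 < a.sum + 1,
        if k % 2 = 0
        then x ⟨j, Nat.lt_of_succ_lt h⟩ < x ⟨j + 1, h⟩
        else x ⟨j + 1, h⟩ < x ⟨j, Nat.lt_of_succ_lt h⟩

/-- The set of tuples whose strict order pattern is described by `σ`. -/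
def Rset (M : ℕ) (σ : Equiv.Perm (Fin M)) : Set (Fin M → ℝ) :=
  {x | ∀ i j : Fin M, σ i < σ j → x i < x j}

lemma measurableSet_Rset (M : ℕ) (σ : Equiv.Perm (Fin M)) : MeasurableSet (Rset M σ) := by
  have : Rset M σ = ⋂ (i : Fin M) (j : Fin M), {x : Fin M → ℝ | σ i < σ j → x i < x j} := by
    ext x; simp [Rset, Set.mem_iInter]
  rw [this]
  refine MeasurableSet.iInter fun i => MeasurableSet.iInter fun j => ?_
  by_cases h : σ i < σ j
  · simp only [h, forall_true_left]
    exact measurableSet_lt (measurable_pi_apply i) (measurable_pi_apply j)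
  · have : {x : Fin M → ℝ | σ i < σ j → x i < x j} = Set.univ := by
      ext x; simp [h]
    rw [this]; exact MeasurableSet.univ

lemma lt_iff_of_mem_Rset {M : ℕ} {σ : Equiv.Perm (Fin M)} {x : Fin M → ℝ}
    (hx : x ∈ Rset M σ) (i j : Fin M) : x i < x j ↔ σ i < σ j := by
  refine ⟨fun h => ?_, hx i j⟩
  rcases lt_trichotomy (σ i) (σ j) with h' | h' | h'
  · exact h'
  · have : i = j := σ.injective h'
    subst this
    exact absurd h (lt_irrefl _)
  · exact absurd (hx j i h') (not_lt.2 h.le)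

lemma injective_of_mem_Rset {M : ℕ} {σ : Equiv.Perm (Fin M)} {x : Fin M → ℝ}
    (hx : x ∈ Rset M σ) : Function.Injective x := by
  intro i j hij
  by_contra hne
  rcases Ne.lt_or_gt (fun h : σ i = σ j => hne (σ.injective h)) with h | h
  · exact absurd (hx i j h) (by rw [hij]; exact lt_irrefl _)
  · exact absurd (hx j i h) (by rw [hij]; exact lt_irrefl _)

lemma eq_of_mem_Rset {M : ℕ} {σ σ' : Equiv.Perm (Fin M)} {x : Fin M → ℝ}
    (hx : x ∈ Rset M σ) (hx' : x ∈ Rset M σ') : σ = σ' := by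
  have hmono : StrictMono (fun r => σ' (σ.symm r)) := by
    intro r s hrs
    have h1 : σ (σ.symm r) < σ (σ.symm s) := by simpa using hrs
    have h2 : x (σ.symm r) < x (σ.symm s) := (lt_iff_of_mem_Rset hx _ _).2 h1
    exact (lt_iff_of_mem_Rset hx' _ _).1 h2
  have hsurj : Function.Surjective (fun r => σ' (σ.symm r)) :=
    (σ'.surjective).comp (σ.symm.surjective)
  have key : ∀ r, σ' (σ.symm r) = r := fun r => by
    have h1 : StrictMono.orderIsoOfSurjective _ hmono hsurj r = r := by
      rw [Subsingleton.elim (StrictMono.orderIsoOfSurjective _ hmono hsurj)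
        (OrderIso.refl (Fin M))]
      rfl
    have h2 := congrFun (StrictMono.coe_orderIsoOfSurjective _ hmono hsurj) r
    rw [← h2]
    exact h1
  ext i
  have := key (σ i)
  simp only [Equiv.symm_apply_apply] at this
  exact congrArg Fin.val this.symm

lemma exists_mem_Rset {M : ℕ} {x : Fin M → ℝ} (hx : Function.Injective x) :
    ∃ σ : Equiv.Perm (Fin M), x ∈ Rset M σ := by
  refine ⟨(Tuple.sort x)⁻¹, ?_⟩
  have hmono : StrictMono (x ∘ Tuple.sort x) :=
    (Tuple.monotone_sort x).strictMono_of_injective (hx.comp (Tuple.sort x).injective)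
  intro i j hij
  have := hmono hij
  simpa using this

variable {α : Type*} [MeasurableSpace α]

lemma measure_pair_eq {M : ℕ} (ν : Measure ℝ) [IsProbabilityMeasure ν]
    (hatom : ∀ c : ℝ, ν {c} = 0) {i j : Fin M} (hij : i ≠ j) :
    Measure.pi (fun _ : Fin M => ν) {x | x i = x j} = 0 := by
  have hmeasf : Measurable (fun x : Fin M → ℝ => (x i, x j)) :=
    (measurable_pi_apply i).prodMk (measurable_pi_apply j)
  have hmap : (Measure.pi (fun _ : Fin M => ν)).map (fun x => (x i, x j)) = ν.prod ν := by
    refine (Measure.prod_eq fun s t hs ht => ?_).symm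
    rw [Measure.map_apply hmeasf (hs.prod ht)]
    have hset : (fun x : Fin M → ℝ => (x i, x j)) ⁻¹' (s ×ˢ t) =
        Set.pi Set.univ (fun l => if l = i then s else if l = j then t else Set.univ) := by
      ext x
      simp only [Set.mem_preimage, Set.mem_prod, Set.mem_pi, Set.mem_univ, forall_true_left]
      constructor
      · rintro ⟨h1, h2⟩ l
        by_cases hl : l = i
        · subst hl; simp [h1]
        · by_cases hl' : l = j
          · subst hl'; simp [hl, h2]
          · simp [hl, hl']
      · intro h
        constructor
        · have := h i; simpa using this
        · have := h j; simpa [hij.symm] using this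
    rw [hset, Measure.pi_pi]
    have houtside : ∀ l ∈ Finset.univ, l ∉ ({i, j} : Finset (Fin M)) →
        ν (if l = i then s else if l = j then t else Set.univ) = 1 := by
      intro l _ hl
      simp only [Finset.mem_insert, Finset.mem_singleton, not_or] at hl
      simp [hl.1, hl.2]
    rw [← Finset.prod_subset (Finset.subset_univ ({i, j} : Finset (Fin M))) houtside,
      Finset.prod_pair hij]
    simp [hij.symm]
  have hD : MeasurableSet {p : ℝ × ℝ | p.1 = p.2} :=
    measurableSet_eq_fun measurable_fst measurable_snd
  have : {x : Fin M → ℝ | x i = x j} = (fun x : Fin M → ℝ => (x i, x j)) ⁻¹' {p | p.1 = p.2} := rfl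
  rw [this, ← Measure.map_apply hmeasf hD, hmap, Measure.prod_apply hD]
  have h0 : ∀ a : ℝ, ν (Prod.mk a ⁻¹' {p : ℝ × ℝ | p.1 = p.2}) = 0 := by
    intro a
    have ha : (Prod.mk a ⁻¹' {p : ℝ × ℝ | p.1 = p.2}) = {a} := by
      ext b; simp [eq_comm]
    rw [ha]; exact hatom a
  simp only [h0]
  exact lintegral_zero

lemma measure_not_injective {M : ℕ} (ν : Measure ℝ) [IsProbabilityMeasure ν]
    (hatom : ∀ c : ℝ, ν {c} = 0) :
    Measure.pi (fun _ : Fin M => ν) {x | ¬ Function.Injective x} = 0 := by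
  have hsub : {x : Fin M → ℝ | ¬ Function.Injective x} ⊆
      ⋃ (i : Fin M) (j : Fin M) (_ : i ≠ j), {x | x i = x j} := by
    intro x hx
    rw [Set.mem_setOf_eq, Function.not_injective_iff] at hx
    obtain ⟨i, j, hxij, hij⟩ := hx
    exact Set.mem_iUnion.2 ⟨i, Set.mem_iUnion.2 ⟨j, Set.mem_iUnion.2 ⟨hij, hxij⟩⟩⟩
  refine measure_mono_null hsub ?_
  refine measure_iUnion_null fun i => measure_iUnion_null fun j => measure_iUnion_null fun hij =>
    measure_pair_eq ν hatom hij

lemma measure_Rset_eq {M : ℕ} (ν : Measure ℝ) [IsProbabilityMeasure ν]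
    (σ : Equiv.Perm (Fin M)) :
    Measure.pi (fun _ : Fin M => ν) (Rset M σ) = Measure.pi (fun _ : Fin M => ν) (Rset M 1) := by
  have hpre : Rset M σ = (MeasurableEquiv.piCongrLeft (fun _ : Fin M => ℝ) σ) ⁻¹' (Rset M 1) := by
    ext x
    simp only [Set.mem_preimage, Rset, Set.mem_setOf_eq]
    constructor
    · intro hx i j hij
      have hi := MeasurableEquiv.piCongrLeft_apply_apply (β := fun _ : Fin M => ℝ) σ x (σ.symm i)
      have hj := MeasurableEquiv.piCongrLeft_apply_apply (β := fun _ : Fin M => ℝ) σ x (σ.symm j)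
      simp only [Equiv.apply_symm_apply] at hi hj
      rw [hi, hj]
      refine hx _ _ ?_
      simpa using hij
    · intro hx i j hij
      have hi := MeasurableEquiv.piCongrLeft_apply_apply (β := fun _ : Fin M => ℝ) σ x i
      have hj := MeasurableEquiv.piCongrLeft_apply_apply (β := fun _ : Fin M => ℝ) σ x j
      have := hx (σ i) (σ j) (by simpa using hij)
      rwa [hi, hj] at this
  rw [hpre]
  exact (measurePreserving_piCongrLeft (fun _ : Fin M => ν) σ).measure_preimage
    (measurableSet_Rset M 1).nullMeasurableSet

lemma measure_Rset {M : ℕ} (ν : Measure ℝ) [IsProbabilityMeasure ν]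
    (hatom : ∀ c : ℝ, ν {c} = 0) (σ : Equiv.Perm (Fin M)) :
    Measure.pi (fun _ : Fin M => ν) (Rset M σ) = ((Nat.factorial M : ℝ≥0∞))⁻¹ := by
  set π := Measure.pi (fun _ : Fin M => ν) with hπ
  have hcover : (Set.univ : Set (Fin M → ℝ)) ⊆
      (⋃ τ : Equiv.Perm (Fin M), Rset M τ) ∪ {x | ¬ Function.Injective x} := by
    intro x _
    by_cases hx : Function.Injective x
    · obtain ⟨τ, hτ⟩ := exists_mem_Rset hx
      exact Or.inl (Set.mem_iUnion.2 ⟨τ, hτ⟩)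
    · exact Or.inr hx
  have hunion : π (⋃ τ : Equiv.Perm (Fin M), Rset M τ) = 1 := by
    have h1 : π (⋃ τ : Equiv.Perm (Fin M), Rset M τ) ≤ 1 := prob_le_one
    have h2 : (1 : ℝ≥0∞) ≤ π (⋃ τ : Equiv.Perm (Fin M), Rset M τ) := by
      calc (1 : ℝ≥0∞) = π Set.univ := (measure_univ).symm
        _ ≤ π ((⋃ τ : Equiv.Perm (Fin M), Rset M τ) ∪ {x | ¬ Function.Injective x}) :=
            measure_mono hcover
        _ ≤ π (⋃ τ : Equiv.Perm (Fin M), Rset M τ) + π {x | ¬ Function.Injective x} :=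
            measure_union_le _ _
        _ = π (⋃ τ : Equiv.Perm (Fin M), Rset M τ) := by
            rw [measure_not_injective ν hatom, add_zero]
    exact le_antisymm h1 h2
  have hsum : ∑ τ : Equiv.Perm (Fin M), π (Rset M τ) = 1 := by
    rw [← hunion]
    rw [← measure_biUnion_finset ?_ (fun τ _ => measurableSet_Rset M τ)]
    · congr 1
      simp
    · intro τ _ τ' _ hττ'
      refine Set.disjoint_left.2 fun x hx hx' => hττ' ?_
      exact eq_of_mem_Rset hx hx'
  have hconst : ∀ τ : Equiv.Perm (Fin M), π (Rset M τ) = π (Rset M 1) :=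
    fun τ => measure_Rset_eq ν τ
  rw [Finset.sum_congr rfl (fun τ _ => hconst τ), Finset.sum_const] at hsum
  simp only [Finset.card_univ, Fintype.card_perm, Fintype.card_fin, nsmul_eq_mul] at hsum
  have hfact0 : ((Nat.factorial M : ℝ≥0∞)) ≠ 0 := by
    exact_mod_cast Nat.cast_ne_zero.2 (Nat.factorial_ne_zero M)
  have hfacttop : ((Nat.factorial M : ℝ≥0∞)) ≠ ⊤ := ENNReal.natCast_ne_top _
  rw [hconst σ]
  rw [← one_div]
  rw [ENNReal.eq_div_iff hfact0 hfacttop]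
  exact hsum

lemma joint_law {M : ℕ} (μ : Measure α) [IsProbabilityMeasure μ]
    (Y : Fin M → α → ℝ) (hm : ∀ i, Measurable (Y i))
    (hind : iIndepFun Y μ)
    (ν : Measure ℝ) [IsProbabilityMeasure ν] (hid : ∀ i, μ.map (Y i) = ν) :
    μ.map (fun ω i => Y i ω) = Measure.pi (fun _ : Fin M => ν) := by
  have hjm : Measurable (fun ω (i : Fin M) => Y i ω) :=
    measurable_pi_lambda _ fun i => hm i
  refine (Measure.pi_eq fun s hs => ?_).symm
  rw [Measure.map_apply hjm (MeasurableSet.univ_pi hs)]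
  have hpre : (fun ω (i : Fin M) => Y i ω) ⁻¹' Set.pi Set.univ s =
      ⋂ i ∈ Finset.univ, Y i ⁻¹' s i := by
    ext ω
    simp [Set.mem_pi]
  rw [hpre, hind.measure_inter_preimage_eq_mul Finset.univ (fun i _ => hs i)]
  refine Finset.prod_congr rfl fun i _ => ?_
  rw [← hid i, Measure.map_apply (hm i) (hs i)]

lemma measurableSet_monotCondR (a : List ℕ) : MeasurableSet {x | MonotCondR a x} := by
  have hrw : {x | MonotCondR a x} = ⋂ (kk : ℕ) (j : ℕ),
      {x : Fin (a.sum + 1) → ℝ | kk < a.length → (a.take kk).sum ≤ j →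
        j < (a.take (kk + 1)).sum → ∀ h : j + 1 < a.sum + 1,
        if kk % 2 = 0 then x ⟨j, Nat.lt_of_succ_lt h⟩ < x ⟨j + 1, h⟩
        else x ⟨j + 1, h⟩ < x ⟨j, Nat.lt_of_succ_lt h⟩} := by
    ext x
    simp only [Set.mem_iInter, Set.mem_setOf_eq, MonotCondR]
    exact ⟨fun h kk j h1 => h kk h1 j, fun h kk h1 j => h kk j h1⟩
  rw [hrw]
  refine MeasurableSet.iInter fun kk => MeasurableSet.iInter fun j => ?_
  by_cases h1 : kk < a.length
  case neg => simp only [h1]; simp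
  by_cases h2 : (a.take kk).sum ≤ j
  case neg => simp only [h2]; simp
  by_cases h3 : j < (a.take (kk + 1)).sum
  case neg => simp only [h3]; simp
  by_cases h4 : j + 1 < a.sum + 1
  case neg =>
    have : {x : Fin (a.sum + 1) → ℝ | kk < a.length → (a.take kk).sum ≤ j →
        j < (a.take (kk + 1)).sum → ∀ h : j + 1 < a.sum + 1,
        if kk % 2 = 0 then x ⟨j, Nat.lt_of_succ_lt h⟩ < x ⟨j + 1, h⟩
        else x ⟨j + 1, h⟩ < x ⟨j, Nat.lt_of_succ_lt h⟩} = Set.univ := by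
      ext x; simp only [Set.mem_setOf_eq, Set.mem_univ, iff_true]
      intro _ _ _ h; exact absurd h h4
    rw [this]; exact MeasurableSet.univ
  have hset : {x : Fin (a.sum + 1) → ℝ | kk < a.length → (a.take kk).sum ≤ j →
      j < (a.take (kk + 1)).sum → ∀ h : j + 1 < a.sum + 1,
      if kk % 2 = 0 then x ⟨j, Nat.lt_of_succ_lt h⟩ < x ⟨j + 1, h⟩
      else x ⟨j + 1, h⟩ < x ⟨j, Nat.lt_of_succ_lt h⟩} =
      {x : Fin (a.sum + 1) → ℝ |
      if kk % 2 = 0 then x ⟨j, Nat.lt_of_succ_lt h4⟩ < x ⟨j + 1, h4⟩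
      else x ⟨j + 1, h4⟩ < x ⟨j, Nat.lt_of_succ_lt h4⟩} := by
    ext x
    simp only [Set.mem_setOf_eq]
    constructor
    · intro hx; exact hx h1 h2 h3 h4
    · intro hx _ _ _ h; exact hx
  rw [hset]
  by_cases hp : kk % 2 = 0
  · simp only [hp, if_true]
    exact measurableSet_lt (measurable_pi_apply _) (measurable_pi_apply _)
  · simp only [hp, if_false]
    exact measurableSet_lt (measurable_pi_apply _) (measurable_pi_apply _)

lemma monotCondR_iff_monotCond {a : List ℕ} {σ : Equiv.Perm (Fin (a.sum + 1))}
    {x : Fin (a.sum + 1) → ℝ} (hx : x ∈ Rset (a.sum + 1) σ) :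
    MonotCondR a x ↔ MonotCond a σ := by
  unfold MonotCondR MonotCond
  refine forall_congr' fun kk => imp_congr_right fun h1 => forall_congr' fun j =>
    imp_congr_right fun h2 => imp_congr_right fun h3 => forall_congr' fun h => ?_
  by_cases hp : kk % 2 = 0
  · simp only [hp, if_true]
    exact lt_iff_of_mem_Rset hx _ _
  · simp only [hp, if_false]
    exact lt_iff_of_mem_Rset hx _ _

lemma iIndepFun_reindex {ι ι' : Type*} {Y : ι → α → ℝ} {μ : Measure α}
    (h : iIndepFun Y μ) (e : ι' → ι) (he : Function.Injective e) :
    iIndepFun (fun i => Y (e i)) μ := by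
  classical
  rw [iIndepFun_iff_measure_inter_preimage_eq_mul] at h ⊢
  intro S sets hsets
  have hkey : ∀ i ∈ S,
      (if ht : ∃ i' ∈ S, e i' = e i then sets ht.choose else Set.univ) = sets i := by
    intro i hi
    have hex : ∃ i' ∈ S, e i' = e i := ⟨i, hi, rfl⟩
    rw [dif_pos hex]
    have := hex.choose_spec
    have heq : hex.choose = i := he this.2
    rw [heq]
  have h1 := h (S.image e)
      (sets := fun t => if ht : ∃ i' ∈ S, e i' = t then sets ht.choose else Set.univ)
      (fun t ht => by
        show MeasurableSet (if ht : ∃ i' ∈ S, e i' = t then sets ht.choose else Set.univ)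
        by_cases hex : ∃ i' ∈ S, e i' = t
        · rw [dif_pos hex]
          exact hsets _ hex.choose_spec.1
        · rw [dif_neg hex]; exact MeasurableSet.univ)
  rw [Finset.set_biInter_finset_image, Finset.prod_image (fun i hi i' hi' hh => he hh)] at h1
  calc μ (⋂ i ∈ S, Y (e i) ⁻¹' sets i)
      = μ (⋂ i ∈ S, Y (e i) ⁻¹'
          (if ht : ∃ i' ∈ S, e i' = e i then sets ht.choose else Set.univ)) := by
        congr 1
        refine Set.iInter_congr fun i => Set.iInter_congr fun hi => ?_
        rw [hkey i hi]
    _ = ∏ i ∈ S, μ (Y (e i) ⁻¹'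
          (if ht : ∃ i' ∈ S, e i' = e i then sets ht.choose else Set.univ)) := h1
    _ = ∏ i ∈ S, μ (Y (e i) ⁻¹' sets i) :=
        Finset.prod_congr rfl fun i hi => by rw [hkey i hi]

lemma measure_monotCondR (a : List ℕ) (μ : Measure α) [IsProbabilityMeasure μ]
    (Y : Fin (a.sum + 1) → α → ℝ) (hm : ∀ i, Measurable (Y i))
    (hind : iIndepFun Y μ)
    (ν : Measure ℝ) [IsProbabilityMeasure ν] (hid : ∀ i, μ.map (Y i) = ν)
    (hatom : ∀ c : ℝ, ν {c} = 0) :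
    μ {ω | MonotCondR a fun i => Y i ω} =
      (Omega a : ℝ≥0∞) / (Nat.factorial (a.sum + 1) : ℝ≥0∞) := by
  classical
  set π := Measure.pi (fun _ : Fin (a.sum + 1) => ν) with hπ
  have hjm : Measurable (fun ω (i : Fin (a.sum + 1)) => Y i ω) :=
    measurable_pi_lambda _ fun i => hm i
  have hJ : μ.map (fun ω i => Y i ω) = π := joint_law μ Y hm hind ν hid
  have hμπ : μ {ω | MonotCondR a fun i => Y i ω} = π {x | MonotCondR a x} := by
    rw [← hJ, Measure.map_apply hjm (measurableSet_monotCondR a)]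
    rfl
  rw [hμπ]
  set S : Finset (Equiv.Perm (Fin (a.sum + 1))) := Finset.univ.filter (fun σ => MonotCond a σ) with hS
  have hUsub : (⋃ σ ∈ S, Rset (a.sum + 1) σ) ⊆ {x | MonotCondR a x} := by
    intro x hx
    rw [Set.mem_iUnion₂] at hx
    obtain ⟨σ, hσS, hxσ⟩ := hx
    rw [hS, Finset.mem_filter] at hσS
    exact (monotCondR_iff_monotCond hxσ).2 hσS.2
  have hBsub : {x | MonotCondR a x} ⊆ (⋃ σ ∈ S, Rset (a.sum + 1) σ) ∪ {x | ¬ Function.Injective x} := by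
    intro x hx
    by_cases hinj : Function.Injective x
    · obtain ⟨σ, hσ⟩ := exists_mem_Rset hinj
      have : MonotCond a σ := (monotCondR_iff_monotCond hσ).1 hx
      exact Or.inl (Set.mem_iUnion₂.2 ⟨σ, by rw [hS, Finset.mem_filter]; exact ⟨Finset.mem_univ _, this⟩, hσ⟩)
    · exact Or.inr hinj
  have hπB : π {x | MonotCondR a x} = π (⋃ σ ∈ S, Rset (a.sum + 1) σ) := by
    refine le_antisymm ?_ (measure_mono hUsub)
    calc π {x | MonotCondR a x}
        ≤ π ((⋃ σ ∈ S, Rset (a.sum + 1) σ) ∪ {x | ¬ Function.Injective x}) := measure_mono hBsub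
      _ ≤ π (⋃ σ ∈ S, Rset (a.sum + 1) σ) + π {x | ¬ Function.Injective x} := measure_union_le _ _
      _ = π (⋃ σ ∈ S, Rset (a.sum + 1) σ) := by rw [measure_not_injective ν hatom, add_zero]
  rw [hπB]
  rw [measure_biUnion_finset ?_ (fun σ _ => measurableSet_Rset (a.sum + 1) σ)]
  · have : ∀ σ ∈ S, π (Rset (a.sum + 1) σ) = ((Nat.factorial (a.sum + 1) : ℝ≥0∞))⁻¹ :=
      fun σ _ => measure_Rset ν hatom σ
    rw [Finset.sum_congr rfl this, Finset.sum_const, nsmul_eq_mul]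
    have hcard : S.card = Omega a := by
      rw [Omega, Nat.card_eq_fintype_card, Fintype.card_subtype]
    rw [hcard, div_eq_mul_inv]
  · intro σ _ σ' _ hσσ'
    refine Set.disjoint_left.2 fun x hx hx' => hσσ' (eq_of_mem_Rset hx hx')

lemma sum_map_range (k : ℕ → ℕ) (t : ℕ) :
    ((List.range t).map k).sum = ∑ l ∈ Finset.range t, k l := by
  induction t with
  | zero => simp
  | succ t ih =>
    rw [List.range_succ, List.map_append, List.sum_append, Finset.sum_range_succ, ih]
    simp

/-- The block-length list associated to the event in the theorem. -/
def aList (n : ℕ) (k : ℕ → ℕ) : List ℕ := 1 :: ((List.range (n + 1)).map k ++ [1])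

lemma aList_length (n : ℕ) (k : ℕ → ℕ) : (aList n k).length = n + 3 := by
  simp [aList]

lemma aList_sum (n : ℕ) (k : ℕ → ℕ) :
    (aList n k).sum = (∑ l ∈ Finset.range (n + 1), k l) + 2 := by
  simp [aList, List.sum_append, sum_map_range]
  omega

lemma aList_take_succ (n : ℕ) (k : ℕ → ℕ) (t : ℕ) (ht : t ≤ n + 1) :
    ((aList n k).take (t + 1)).sum = 1 + ∑ l ∈ Finset.range t, k l := by
  rw [aList, List.take_succ_cons]
  rw [List.take_append_of_le_length (by simpa using ht)]
  rw [← List.map_take, List.take_range]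
  rw [Nat.min_eq_left ht]
  rw [List.sum_cons, sum_map_range]

lemma aList_take_top (n : ℕ) (k : ℕ → ℕ) :
    ((aList n k).take (n + 3)).sum = (aList n k).sum := by
  rw [List.take_of_length_le (by rw [aList_length])]

lemma decode_iff {α : Type*} (X : ℤ → α → ℝ) (n : ℕ) (k : ℕ → ℕ) (ω : α) :
    MonotCondR (aList n k) (fun i => X ((i : ℤ) - 1) ω) ↔
      (X (-1) ω < X 0 ω ∧
        (∀ j ≤ n, j % 2 = 0 →
          ∀ m : ℕ, (∑ l ∈ Finset.range j, k l) ≤ m →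
            m < (∑ l ∈ Finset.range (j + 1), k l) →
            X ((m : ℤ) + 1) ω < X (m : ℤ) ω) ∧
        (∀ j ≤ n, j % 2 = 1 →
          ∀ m : ℕ, (∑ l ∈ Finset.range j, k l) ≤ m →
            m < (∑ l ∈ Finset.range (j + 1), k l) →
            X (m : ℤ) ω < X ((m : ℤ) + 1) ω) ∧
        (if n % 2 = 0 then
          X ((∑ l ∈ Finset.range (n + 1), k l : ℕ) : ℤ) ω <
            X (((∑ l ∈ Finset.range (n + 1), k l : ℕ) : ℤ) + 1) ω
        else
          X (((∑ l ∈ Finset.range (n + 1), k l : ℕ) : ℤ) + 1) ω <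
            X ((∑ l ∈ Finset.range (n + 1), k l : ℕ) : ℤ) ω)) := by
  have hmono : ∀ {p q : ℕ}, p ≤ q →
      (∑ l ∈ Finset.range p, k l) ≤ ∑ l ∈ Finset.range q, k l :=
    fun h => Finset.sum_le_sum_of_subset (Finset.range_subset_range.2 h)
  have hsum := aList_sum n k
  have harg0 : ((0 : ℕ) : ℤ) - 1 = -1 := by norm_num
  have harg : ∀ m : ℕ, ((m + 1 : ℕ) : ℤ) - 1 = (m : ℤ) := by intro m; push_cast; ring
  have harg2 : ∀ m : ℕ, ((m + 2 : ℕ) : ℤ) - 1 = (m : ℤ) + 1 := by intro m; push_cast; ring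
  constructor
  · intro H
    refine ⟨?_, ?_, ?_, ?_⟩
    · have h1 : (0 : ℕ) + 1 < (aList n k).sum + 1 := by omega
      have := H 0 (by rw [aList_length]; omega) 0 (by simp)
        (by rw [aList_take_succ n k 0 (by omega)]; simp) h1
      rw [if_pos (by norm_num)] at this
      show X (-1) ω < X 0 ω
      have e0 : X (((⟨0, Nat.lt_of_succ_lt h1⟩ : Fin ((aList n k).sum + 1)) : ℤ) - 1) ω
          = X (-1) ω := by norm_num
      have e1 : X (((⟨0 + 1, h1⟩ : Fin ((aList n k).sum + 1)) : ℤ) - 1) ω = X 0 ω := by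
        norm_num
      simpa only [e0, e1] using this
    · intro j hj hj2 m hm1 hm2
      have hkk : j + 1 < (aList n k).length := by rw [aList_length]; omega
      have hj1' : ((aList n k).take (j + 1)).sum ≤ m + 1 := by
        rw [aList_take_succ n k j (by omega)]; omega
      have hj2' : m + 1 < ((aList n k).take (j + 1 + 1)).sum := by
        rw [aList_take_succ n k (j + 1) (by omega)]; omega
      have hmle : m < ∑ l ∈ Finset.range (n + 1), k l :=
        lt_of_lt_of_le hm2 (hmono (by omega))
      have h : m + 1 + 1 < (aList n k).sum + 1 := by omega
      have := H (j + 1) hkk (m + 1) hj1' hj2' h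
      rw [if_neg (by omega)] at this
      have e1 : X (((⟨m + 1 + 1, h⟩ : Fin ((aList n k).sum + 1)) : ℤ) - 1) ω
          = X ((m : ℤ) + 1) ω := by rw [show ((m + 1 + 1 : ℕ) : ℤ) - 1 = (m : ℤ) + 1 by push_cast; ring]
      have e2 : X (((⟨m + 1, Nat.lt_of_succ_lt h⟩ : Fin ((aList n k).sum + 1)) : ℤ) - 1) ω
          = X (m : ℤ) ω := by rw [harg m]
      simpa only [e1, e2] using this
    · intro j hj hj2 m hm1 hm2
      have hkk : j + 1 < (aList n k).length := by rw [aList_length]; omega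
      have hj1' : ((aList n k).take (j + 1)).sum ≤ m + 1 := by
        rw [aList_take_succ n k j (by omega)]; omega
      have hj2' : m + 1 < ((aList n k).take (j + 1 + 1)).sum := by
        rw [aList_take_succ n k (j + 1) (by omega)]; omega
      have hmle : m < ∑ l ∈ Finset.range (n + 1), k l :=
        lt_of_lt_of_le hm2 (hmono (by omega))
      have h : m + 1 + 1 < (aList n k).sum + 1 := by omega
      have := H (j + 1) hkk (m + 1) hj1' hj2' h
      rw [if_pos (by omega)] at this
      have e1 : X (((⟨m + 1 + 1, h⟩ : Fin ((aList n k).sum + 1)) : ℤ) - 1) ω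
          = X ((m : ℤ) + 1) ω := by rw [show ((m + 1 + 1 : ℕ) : ℤ) - 1 = (m : ℤ) + 1 by push_cast; ring]
      have e2 : X (((⟨m + 1, Nat.lt_of_succ_lt h⟩ : Fin ((aList n k).sum + 1)) : ℤ) - 1) ω
          = X (m : ℤ) ω := by rw [harg m]
      simpa only [e1, e2] using this
    · set Sn := ∑ l ∈ Finset.range (n + 1), k l with hSn
      have hkk : n + 2 < (aList n k).length := by rw [aList_length]; omega
      have hj1' : ((aList n k).take (n + 2)).sum ≤ Sn + 1 := by
        rw [aList_take_succ n k (n + 1) (by omega)]; omega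
      have hj2' : Sn + 1 < ((aList n k).take (n + 2 + 1)).sum := by
        rw [aList_take_top, hsum]; omega
      have h : Sn + 1 + 1 < (aList n k).sum + 1 := by omega
      have H' := H (n + 2) hkk (Sn + 1) hj1' hj2' h
      have e1 : X (((⟨Sn + 1 + 1, h⟩ : Fin ((aList n k).sum + 1)) : ℤ) - 1) ω
          = X ((Sn : ℤ) + 1) ω := by rw [show ((Sn + 1 + 1 : ℕ) : ℤ) - 1 = (Sn : ℤ) + 1 by push_cast; ring]
      have e2 : X (((⟨Sn + 1, Nat.lt_of_succ_lt h⟩ : Fin ((aList n k).sum + 1)) : ℤ) - 1) ω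
          = X (Sn : ℤ) ω := by rw [harg Sn]
      by_cases hn : n % 2 = 0
      · rw [if_pos hn]
        rw [if_pos (by omega)] at H'
        simpa only [e1, e2] using H'
      · rw [if_neg hn]
        rw [if_neg (by omega)] at H'
        simpa only [e1, e2] using H'
  · rintro ⟨h1, h2, h3, h4⟩
    intro kk hkk j hj1 hj2 h
    rw [aList_length] at hkk
    match kk, hkk with
    | 0, _ =>
      rw [aList_take_succ n k 0 (by omega)] at hj2
      simp only [Finset.range_zero, Finset.sum_empty] at hj2
      have hj0 : j = 0 := by omega
      subst hj0
      rw [if_pos (by norm_num)]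
      have e0 : X (((⟨0, Nat.lt_of_succ_lt h⟩ : Fin ((aList n k).sum + 1)) : ℤ) - 1) ω
          = X (-1) ω := by norm_num
      have e1 : X (((⟨0 + 1, h⟩ : Fin ((aList n k).sum + 1)) : ℤ) - 1) ω = X 0 ω := by
        norm_num
      show X (((⟨0, Nat.lt_of_succ_lt h⟩ : Fin ((aList n k).sum + 1)) : ℤ) - 1) ω
          < X (((⟨0 + 1, h⟩ : Fin ((aList n k).sum + 1)) : ℤ) - 1) ω
      rw [e0, e1]
      exact h1
    | (t + 1), _ =>
      by_cases htop : t = n + 1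
      · -- last block
        subst htop
        rw [aList_take_succ n k (n + 1) (by omega)] at hj1
        rw [aList_take_top, hsum] at hj2
        set Sn := ∑ l ∈ Finset.range (n + 1), k l with hSn
        have hj0 : j = Sn + 1 := by omega
        subst hj0
        have e1 : X (((⟨Sn + 1 + 1, h⟩ : Fin ((aList n k).sum + 1)) : ℤ) - 1) ω
            = X ((Sn : ℤ) + 1) ω := by
          rw [show ((Sn + 1 + 1 : ℕ) : ℤ) - 1 = (Sn : ℤ) + 1 by push_cast; ring]
        have e2 : X (((⟨Sn + 1, Nat.lt_of_succ_lt h⟩ : Fin ((aList n k).sum + 1)) : ℤ) - 1) ω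
            = X (Sn : ℤ) ω := by rw [harg Sn]
        by_cases hn : n % 2 = 0
        · rw [if_pos (by omega)]
          rw [if_pos hn] at h4
          show X (((⟨Sn + 1, Nat.lt_of_succ_lt h⟩ : Fin ((aList n k).sum + 1)) : ℤ) - 1) ω
              < X (((⟨Sn + 1 + 1, h⟩ : Fin ((aList n k).sum + 1)) : ℤ) - 1) ω
          rw [e1, e2]
          exact h4
        · rw [if_neg (by omega)]
          rw [if_neg hn] at h4
          show X (((⟨Sn + 1 + 1, h⟩ : Fin ((aList n k).sum + 1)) : ℤ) - 1) ω
              < X (((⟨Sn + 1, Nat.lt_of_succ_lt h⟩ : Fin ((aList n k).sum + 1)) : ℤ) - 1) ω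
          rw [e1, e2]
          exact h4
      · -- middle blocks
        have ht : t ≤ n := by omega
        rw [aList_take_succ n k t (by omega)] at hj1
        rw [aList_take_succ n k (t + 1) (by omega)] at hj2
        have hj0 : 1 ≤ j := by omega
        obtain ⟨m, rfl⟩ : ∃ m, j = m + 1 := ⟨j - 1, by omega⟩
        have hm1 : (∑ l ∈ Finset.range t, k l) ≤ m := by omega
        have hm2 : m < ∑ l ∈ Finset.range (t + 1), k l := by omega
        have e1 : X (((⟨m + 1 + 1, h⟩ : Fin ((aList n k).sum + 1)) : ℤ) - 1) ω
            = X ((m : ℤ) + 1) ω := by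
          rw [show ((m + 1 + 1 : ℕ) : ℤ) - 1 = (m : ℤ) + 1 by push_cast; ring]
        have e2 : X (((⟨m + 1, Nat.lt_of_succ_lt h⟩ : Fin ((aList n k).sum + 1)) : ℤ) - 1) ω
            = X (m : ℤ) ω := by rw [harg m]
        by_cases hpar : t % 2 = 0
        · rw [if_neg (by omega)]
          show X (((⟨m + 1 + 1, h⟩ : Fin ((aList n k).sum + 1)) : ℤ) - 1) ω
              < X (((⟨m + 1, Nat.lt_of_succ_lt h⟩ : Fin ((aList n k).sum + 1)) : ℤ) - 1) ω
          rw [e1, e2]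
          exact h2 t ht hpar m hm1 hm2
        · rw [if_pos (by omega)]
          show X (((⟨m + 1, Nat.lt_of_succ_lt h⟩ : Fin ((aList n k).sum + 1)) : ℤ) - 1) ω
              < X (((⟨m + 1 + 1, h⟩ : Fin ((aList n k).sum + 1)) : ℤ) - 1) ω
          rw [e1, e2]
          exact h3 t ht (by omega) m hm1 hm2

lemma monotCondR_two (x : Fin (([1, 1] : List ℕ).sum + 1) → ℝ) :
    MonotCondR [1, 1] x ↔
      (x ⟨0, by decide⟩ < x ⟨1, by decide⟩ ∧ x ⟨2, by decide⟩ < x ⟨1, by decide⟩) := by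
  constructor
  · intro H
    constructor
    · have hA := H 0 (by decide) 0 (by decide) (by decide) (by decide)
      rw [if_pos (by decide)] at hA
      exact hA
    · have hB := H 1 (by decide) 1 (by decide) (by decide) (by decide)
      rw [if_neg (by decide)] at hB
      exact hB
  · rintro ⟨hA, hB⟩ kk hkk j hj1 hj2 h
    have hkk2 : kk < 2 := by simpa using hkk
    match kk, hkk2 with
    | 0, _ =>
      have hj2' : j < 1 := by
        have h1 : ((([1, 1] : List ℕ).take (0 + 1)).sum) = 1 := by decide
        omega
      have hj0 : j = 0 := by omega
      subst hj0
      rw [if_pos (by decide)]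
      exact hA
    | 1, _ =>
      have hj1' : 1 ≤ j := by
        have h1 : ((([1, 1] : List ℕ).take 1).sum) = 1 := by decide
        omega
      have hj2' : j < 2 := by
        have h1 : ((([1, 1] : List ℕ).take (1 + 1)).sum) = 2 := by decide
        omega
      have hj0 : j = 1 := by omega
      subst hj0
      rw [if_neg (by decide)]
      exact hB

lemma monotCond_iff_R {a : List ℕ} (τ : Equiv.Perm (Fin (a.sum + 1))) :
    MonotCond a τ ↔ MonotCondR a (fun i => ((τ i : ℕ) : ℝ)) := by
  unfold MonotCond MonotCondR
  refine forall_congr' fun kk => imp_congr_right fun _ => forall_congr' fun j =>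
    imp_congr_right fun _ => imp_congr_right fun _ => forall_congr' fun h => ?_
  by_cases hp : kk % 2 = 0
  · rw [if_pos hp, if_pos hp]
    simp only [Fin.lt_iff_val_lt_val, Nat.cast_lt]
  · rw [if_neg hp, if_neg hp]
    simp only [Fin.lt_iff_val_lt_val, Nat.cast_lt]

lemma Omega_two : Omega [1, 1] = 2 := by
  rw [Omega]
  have he : ∀ τ : Equiv.Perm (Fin (([1, 1] : List ℕ).sum + 1)),
      MonotCond [1, 1] τ ↔
        (τ ⟨0, by decide⟩ < τ ⟨1, by decide⟩ ∧ τ ⟨2, by decide⟩ < τ ⟨1, by decide⟩) := by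
    intro τ
    rw [monotCond_iff_R, monotCondR_two]
    simp only [Fin.lt_iff_val_lt_val, Nat.cast_lt]
  rw [Nat.card_congr (Equiv.subtypeEquivRight he)]
  rw [Nat.card_eq_fintype_card]
  decide

end Stmt13Aux

open MeasureTheory ProbabilityTheory Stmt13Aux in
theorem stmt_13
    {α : Type*} [MeasurableSpace α] (μ : Measure α) [IsProbabilityMeasure μ]
    (X : ℤ → α → ℝ) (hmeas : ∀ t, Measurable (X t))
    (hindep : iIndepFun X μ)
    (hident : ∀ t, Measure.map (X t) μ = Measure.map (X 0) μ)
    (hatomless : ∀ c : ℝ, Measure.map (X 0) μ {c} = 0)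
    (n : ℕ) (k : ℕ → ℕ) (hk : ∀ j ≤ n, 0 < k j) :
    (μ[|{ω | X (-1) ω < X 0 ω ∧ X 1 ω < X 0 ω}])
        {ω | X (-1) ω < X 0 ω ∧
          (∀ j ≤ n, j % 2 = 0 →
            ∀ m : ℕ, (∑ l ∈ Finset.range j, k l) ≤ m →
              m < (∑ l ∈ Finset.range (j + 1), k l) →
              X ((m : ℤ) + 1) ω < X (m : ℤ) ω) ∧
          (∀ j ≤ n, j % 2 = 1 →
            ∀ m : ℕ, (∑ l ∈ Finset.range j, k l) ≤ m →
              m < (∑ l ∈ Finset.range (j + 1), k l) →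
              X (m : ℤ) ω < X ((m : ℤ) + 1) ω) ∧
          (if n % 2 = 0 then
            X ((∑ l ∈ Finset.range (n + 1), k l : ℕ) : ℤ) ω <
              X (((∑ l ∈ Finset.range (n + 1), k l : ℕ) : ℤ) + 1) ω
          else
            X (((∑ l ∈ Finset.range (n + 1), k l : ℕ) : ℤ) + 1) ω <
              X ((∑ l ∈ Finset.range (n + 1), k l : ℕ) : ℤ) ω)} =
      ENNReal.ofReal (3 * Omega' (1 :: ((List.range (n + 1)).map k ++ [1]))) := by
  classical
  have hνprob : IsProbabilityMeasure (Measure.map (X 0) μ) :=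
    Measure.isProbabilityMeasure_map (hmeas 0).aemeasurable
  have hinj1 : Function.Injective (fun i : Fin ((aList n k).sum + 1) => (i : ℤ) - 1) := by
    intro i j hij
    apply Fin.ext
    have : ((i : ℕ) : ℤ) = ((j : ℕ) : ℤ) := by simp only at hij; omega
    exact_mod_cast this
  have hinj2 : Function.Injective (fun i : Fin (([1, 1] : List ℕ).sum + 1) => (i : ℤ) - 1) := by
    intro i j hij
    apply Fin.ext
    have : ((i : ℕ) : ℤ) = ((j : ℕ) : ℤ) := by simp only at hij; omega
    exact_mod_cast this
  have hA : μ {ω | MonotCondR (aList n k)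
      fun i : Fin ((aList n k).sum + 1) => X ((i : ℤ) - 1) ω} =
      (Omega (aList n k) : ℝ≥0∞) / (Nat.factorial ((aList n k).sum + 1) : ℝ≥0∞) :=
    measure_monotCondR (aList n k) μ (fun i ω => X ((i : ℤ) - 1) ω) (fun i => hmeas _)
      (iIndepFun_reindex hindep _ hinj1) (Measure.map (X 0) μ) (fun i => hident _) hatomless
  have hC : μ {ω | MonotCondR [1, 1]
      fun i : Fin (([1, 1] : List ℕ).sum + 1) => X ((i : ℤ) - 1) ω} =
      (Omega [1, 1] : ℝ≥0∞) / (Nat.factorial (([1, 1] : List ℕ).sum + 1) : ℝ≥0∞) :=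
    measure_monotCondR [1, 1] μ (fun i ω => X ((i : ℤ) - 1) ω) (fun i => hmeas _)
      (iIndepFun_reindex hindep _ hinj2) (Measure.map (X 0) μ) (fun i => hident _) hatomless
  have hCmeas : MeasurableSet {ω | X (-1) ω < X 0 ω ∧ X 1 ω < X 0 ω} :=
    (measurableSet_lt (hmeas (-1)) (hmeas 0)).inter (measurableSet_lt (hmeas 1) (hmeas 0))
  rw [ProbabilityTheory.cond_apply hCmeas]
  have hsub : {ω | X (-1) ω < X 0 ω ∧
          (∀ j ≤ n, j % 2 = 0 →
            ∀ m : ℕ, (∑ l ∈ Finset.range j, k l) ≤ m →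
              m < (∑ l ∈ Finset.range (j + 1), k l) →
              X ((m : ℤ) + 1) ω < X (m : ℤ) ω) ∧
          (∀ j ≤ n, j % 2 = 1 →
            ∀ m : ℕ, (∑ l ∈ Finset.range j, k l) ≤ m →
              m < (∑ l ∈ Finset.range (j + 1), k l) →
              X (m : ℤ) ω < X ((m : ℤ) + 1) ω) ∧
          (if n % 2 = 0 then
            X ((∑ l ∈ Finset.range (n + 1), k l : ℕ) : ℤ) ω <
              X (((∑ l ∈ Finset.range (n + 1), k l : ℕ) : ℤ) + 1) ω
          else
            X (((∑ l ∈ Finset.range (n + 1), k l : ℕ) : ℤ) + 1) ω <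
              X ((∑ l ∈ Finset.range (n + 1), k l : ℕ) : ℤ) ω)} ⊆
      {ω | X (-1) ω < X 0 ω ∧ X 1 ω < X 0 ω} := by
    rintro ω ⟨hx1, hx2, -, -⟩
    refine ⟨hx1, ?_⟩
    have h0 := hx2 0 (Nat.zero_le n) rfl 0 (by simp)
      (by simpa [Finset.sum_range_one] using hk 0 (Nat.zero_le n))
    simpa using h0
  rw [Set.inter_eq_self_of_subset_right hsub]
  have hAeq : {ω | X (-1) ω < X 0 ω ∧
          (∀ j ≤ n, j % 2 = 0 →
            ∀ m : ℕ, (∑ l ∈ Finset.range j, k l) ≤ m →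
              m < (∑ l ∈ Finset.range (j + 1), k l) →
              X ((m : ℤ) + 1) ω < X (m : ℤ) ω) ∧
          (∀ j ≤ n, j % 2 = 1 →
            ∀ m : ℕ, (∑ l ∈ Finset.range j, k l) ≤ m →
              m < (∑ l ∈ Finset.range (j + 1), k l) →
              X (m : ℤ) ω < X ((m : ℤ) + 1) ω) ∧
          (if n % 2 = 0 then
            X ((∑ l ∈ Finset.range (n + 1), k l : ℕ) : ℤ) ω <
              X (((∑ l ∈ Finset.range (n + 1), k l : ℕ) : ℤ) + 1) ω
          else
            X (((∑ l ∈ Finset.range (n + 1), k l : ℕ) : ℤ) + 1) ω <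
              X ((∑ l ∈ Finset.range (n + 1), k l : ℕ) : ℤ) ω)} =
      {ω | MonotCondR (aList n k)
        fun i : Fin ((aList n k).sum + 1) => X ((i : ℤ) - 1) ω} :=
    Set.ext fun ω => (decode_iff X n k ω).symm
  have hCeq : {ω | X (-1) ω < X 0 ω ∧ X 1 ω < X 0 ω} =
      {ω | MonotCondR [1, 1]
        fun i : Fin (([1, 1] : List ℕ).sum + 1) => X ((i : ℤ) - 1) ω} := by
    ext ω
    rw [Set.mem_setOf_eq, Set.mem_setOf_eq,
      monotCondR_two (fun i : Fin (([1, 1] : List ℕ).sum + 1) => X ((i : ℤ) - 1) ω)]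
    have e0 : X (((⟨0, by decide⟩ : Fin (([1, 1] : List ℕ).sum + 1)) : ℤ) - 1) ω
        = X (-1) ω := by norm_num
    have e1 : X (((⟨1, by decide⟩ : Fin (([1, 1] : List ℕ).sum + 1)) : ℤ) - 1) ω
        = X 0 ω := by norm_num
    have e2 : X (((⟨2, by decide⟩ : Fin (([1, 1] : List ℕ).sum + 1)) : ℤ) - 1) ω
        = X 1 ω := by norm_num
    simp only [e0, e1, e2]
  rw [hAeq, hCeq, hA, hC, Omega_two]
  have hf3 : Nat.factorial (([1, 1] : List ℕ).sum + 1) = 6 := by decide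
  rw [hf3]
  have hinv : (((2 : ℕ) : ℝ≥0∞) / ((6 : ℕ) : ℝ≥0∞))⁻¹ = 3 := by
    rw [ENNReal.inv_div (Or.inl (by norm_num)) (Or.inl (by norm_num))]
    rw [show ((6 : ℕ) : ℝ≥0∞) = 3 * ((2 : ℕ) : ℝ≥0∞) by norm_num]
    rw [mul_div_assoc, ENNReal.div_self (by norm_num) (by norm_num), mul_one]
  rw [hinv]
  rw [Omega', ENNReal.ofReal_mul (by norm_num : (0 : ℝ) ≤ 3)]
  rw [ENNReal.ofReal_div_of_pos (by exact_mod_cast Nat.factorial_pos _)]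
  rw [ENNReal.ofReal_natCast, ENNReal.ofReal_natCast, ENNReal.ofReal_ofNat]
  rfl
end

section
/- Σ_{k=1}^{∞} k · 3(k² + 3k + 1)/(k+3)! = 3/2. (This is the expectation E μ₀ of the distance μ₀ from a local maximum at 0 to the next local minimum, whose distribution is P{μ₀ = k} = 3(k² + 3k + 1)/(k+3)!.) -/
noncomputable def myb (n : ℕ) : ℝ := 3 * ((n:ℝ)^2 + 3*n + 3) / Nat.factorial (n + 3)

lemma myb_nonneg (n : ℕ) : 0 ≤ myb n := by
  unfold myb; positivity

lemma myb_le (n : ℕ) : myb n ≤ 9 / Nat.factorial n := by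
  unfold myb
  have h1 : (Nat.factorial (n+3) : ℝ) = ((n+3):ℝ) * ((n+2):ℝ) * ((n+1):ℝ) * Nat.factorial n := by
    show ((n+2+1).factorial : ℝ) = _
    rw [Nat.factorial_succ, Nat.factorial_succ, Nat.factorial_succ]
    push_cast; ring
  have hf : (0:ℝ) < Nat.factorial n := by exact_mod_cast Nat.factorial_pos n
  rw [h1, div_le_div_iff₀ (by positivity) hf]
  have hn : (0:ℝ) ≤ n := Nat.cast_nonneg n
  nlinarith [sq_nonneg ((n:ℝ)), hf.le, mul_nonneg hn hf.le, mul_nonneg (mul_nonneg hn hn) hf.le]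

lemma myb_tendsto : Filter.Tendsto myb Filter.atTop (nhds 0) := by
  have h9 : Filter.Tendsto (fun n : ℕ => 9 / (Nat.factorial n : ℝ)) Filter.atTop (nhds 0) := by
    have h := (Real.summable_pow_div_factorial 1).tendsto_atTop_zero.const_mul (9:ℝ)
    simpa [div_eq_mul_inv, mul_comm] using h
  exact squeeze_zero myb_nonneg myb_le h9

lemma key_step (n : ℕ) :
    ((n:ℝ)+1) * (3 * (((n:ℝ)+1)^2 + 3*((n:ℝ)+1) + 1) / Nat.factorial (n + 4)) =
      myb n - myb (n+1) := by
  unfold myb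
  have h1 : (Nat.factorial (n+4) : ℝ) = ((n+4):ℝ) * Nat.factorial (n+3) := by
    show ((n+3+1).factorial : ℝ) = _
    rw [Nat.factorial_succ]; push_cast; ring
  have h2 : ((n+1)+3) = n + 4 := by ring
  rw [h2, h1]
  have hf : (0:ℝ) < Nat.factorial (n+3) := by exact_mod_cast Nat.factorial_pos (n+3)
  field_simp
  push_cast
  ring

theorem stmt_14 :
    ∑' k : ℕ+, (k : ℝ) * (3 * ((k : ℝ) ^ 2 + 3 * k + 1) / Nat.factorial (k + 3)) =
      3 / 2 := by
  rw [← Equiv.pnatEquivNat.symm.tsum_eq]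
  have hb0 : myb 0 = 3/2 := by norm_num [myb, Nat.factorial]
  have hs : HasSum (fun n : ℕ => ((n:ℝ)+1) * (3 * (((n:ℝ)+1)^2 + 3*((n:ℝ)+1) + 1) / Nat.factorial (n + 4))) (3/2) := by
    rw [hasSum_iff_tendsto_nat_of_nonneg (fun n => by positivity)]
    have : ∀ n, ∑ i ∈ Finset.range n, ((i:ℝ)+1) * (3 * (((i:ℝ)+1)^2 + 3*((i:ℝ)+1) + 1) / Nat.factorial (i + 4)) = myb 0 - myb n := by
      intro n
      rw [← Finset.sum_range_sub' myb n]
      exact Finset.sum_congr rfl fun i _ => key_step i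
    simp_rw [this, hb0]
    simpa using tendsto_const_nhds.sub myb_tendsto
  rw [← hs.tsum_eq]
  congr 1
  funext n
  simp [Equiv.pnatEquivNat, Nat.succPNat]
end

section
/- Σ_{k=1}^{∞} k² · 3(k² + 3k + 1)/(k+3)! − (3/2)² = 6e − 63/4, where e is Euler's number. (This is the variance Var μ₀ ≈ 0.560 of the distance μ₀ from a local maximum at 0 to the next local minimum, whose distribution is P{μ₀ = k} = 3(k² + 3k + 1)/(k+3)! and whose mean is 3/2.) -/
open Finset

private noncomputable def aa : ℕ → ℝ := fun n => 1 / n.factorial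

private lemma ha : Summable aa := by
  have h := Real.summable_pow_div_factorial (1 : ℝ)
  simp only [one_pow] at h
  exact h

private lemma ha' (j : ℕ) : Summable (fun n => aa (n + j)) :=
  (summable_nat_add_iff j).2 ha

private lemma hexp : ∑' n, aa n = Real.exp 1 := by
  rw [Real.exp_eq_exp_ℝ, NormedSpace.exp_eq_tsum_div]
  simp [aa]

private lemma hS (j : ℕ) : ∑' n, aa (n + j) = Real.exp 1 - ∑ i ∈ range j, aa i := by
  have := Summable.sum_add_tsum_nat_add (f := aa) j ha
  rw [hexp] at this
  linarith

private lemma key (n : ℕ) :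
    ((n : ℝ) + 1) ^ 2 * (3 * (((n : ℝ) + 1) ^ 2 + 3 * ((n : ℝ) + 1) + 1) /
      (Nat.factorial (n + 4))) =
    3 * aa n - 9 * aa (n + 1) + 24 * aa (n + 2) - 39 * aa (n + 3) + 27 * aa (n + 4) := by
  have h0 : (n.factorial : ℝ) ≠ 0 := Nat.cast_ne_zero.2 n.factorial_ne_zero
  simp only [aa, show n + 4 = n + 1 + 1 + 1 + 1 from rfl, show n + 3 = n + 1 + 1 + 1 from rfl,
    show n + 2 = n + 1 + 1 from rfl, Nat.factorial_succ]
  push_cast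
  field_simp
  ring

theorem stmt_15 :
    ∑' k : ℕ+, (k : ℝ) ^ 2 * (3 * ((k : ℝ) ^ 2 + 3 * k + 1) / Nat.factorial (k + 3)) -
        (3 / 2) ^ 2 =
      6 * Real.exp 1 - 63 / 4 := by
  have h1 : ∑' k : ℕ+, (k : ℝ) ^ 2 * (3 * ((k : ℝ) ^ 2 + 3 * k + 1) / Nat.factorial (k + 3))
      = ∑' n : ℕ, (3 * aa n - 9 * aa (n + 1) + 24 * aa (n + 2) - 39 * aa (n + 3)
        + 27 * aa (n + 4)) := by
    rw [← Equiv.tsum_eq Equiv.pnatEquivNat.symm]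
    refine tsum_congr fun n => ?_
    have hc : ((Equiv.pnatEquivNat.symm n : ℕ+) : ℕ) = n + 1 := by simp
    rw [show ((Equiv.pnatEquivNat.symm n : ℕ+) : ℝ) = (n : ℝ) + 1 by exact_mod_cast hc,
      show ((Equiv.pnatEquivNat.symm n : ℕ+) : ℕ) + 3 = n + 4 by omega]
    exact key n
  have s0 := ha.mul_left 3
  have s1 := (ha' 1).mul_left 9
  have s2 := (ha' 2).mul_left 24
  have s3 := (ha' 3).mul_left 39
  have s4 := (ha' 4).mul_left 27
  rw [h1, Summable.tsum_add (((s0.sub s1).add s2).sub s3) s4,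
    Summable.tsum_sub ((s0.sub s1).add s2) s3, Summable.tsum_add (s0.sub s1) s2, Summable.tsum_sub s0 s1,
    tsum_mul_left, tsum_mul_left, tsum_mul_left, tsum_mul_left, tsum_mul_left]
  have e1 : ∑' n, aa (n + 1) = Real.exp 1 - 1 := by
    rw [hS]; norm_num [Finset.sum_range_succ, aa]
  have e2 : ∑' n, aa (n + 2) = Real.exp 1 - 2 := by
    rw [hS]; norm_num [Finset.sum_range_succ, aa]
  have e3 : ∑' n, aa (n + 3) = Real.exp 1 - 5 / 2 := by
    rw [hS]; norm_num [Finset.sum_range_succ, aa, Nat.factorial]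
  have e4 : ∑' n, aa (n + 4) = Real.exp 1 - 8 / 3 := by
    rw [hS]; norm_num [Finset.sum_range_succ, aa, Nat.factorial]
  rw [hexp, e1, e2, e3, e4]
  ring
end

section
/- For every real x with |x| < π/2, one has 1/cosh(x) = Σ_{n=0}^{∞} (−1)ⁿ · b_{2n} · x^{2n}/(2n)!, where b_0 := 1 and, for n ≥ 1, b_{2n} is the number of alternating permutations of {0, 1, …, 2n−1}. (Equivalently, the Euler numbers E_{2n} defined by 1/cosh(x) = Σ (E_k/k!)xᵏ satisfy b_{2n} = (−1)ⁿ E_{2n}.) -/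
/-- A permutation `τ` of `{0, …, m−1}` is alternating if `τ(j) < τ(j+1)` for even `j`
and `τ(j) > τ(j+1)` for odd `j`, for all `0 ≤ j < m − 1`. -/
def IsAlternating (m : ℕ) (τ : Equiv.Perm (Fin m)) : Prop :=
  ∀ j : ℕ, ∀ h : j + 1 < m,
    if j % 2 = 0
    then τ ⟨j, Nat.lt_of_succ_lt h⟩ < τ ⟨j + 1, h⟩
    else τ ⟨j + 1, h⟩ < τ ⟨j, Nat.lt_of_succ_lt h⟩

/-- `b m` is the number of alternating permutations of the `m`-element set `{0, …, m−1}`. -/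
noncomputable def altCount (m : ℕ) : ℕ :=
  Nat.card {τ : Equiv.Perm (Fin m) // IsAlternating m τ}

open scoped NNReal ENNReal

namespace AltAux

/-- strictly increasing on positions `0, …, t-1`. -/
def IncUpTo (m t : ℕ) (w : Equiv.Perm (Fin m)) : Prop :=
  ∀ j : ℕ, j + 1 < t → ∀ hm : j + 1 < m,
    w ⟨j, Nat.lt_of_succ_lt hm⟩ < w ⟨j + 1, hm⟩

/-- alternating (w.r.t. global parity) from position `t` on. -/
def AltFrom (m t : ℕ) (w : Equiv.Perm (Fin m)) : Prop :=
  ∀ j : ℕ, t ≤ j → ∀ hm : j + 1 < m,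
    if j % 2 = 0
    then w ⟨j, Nat.lt_of_succ_lt hm⟩ < w ⟨j + 1, hm⟩
    else w ⟨j + 1, hm⟩ < w ⟨j, Nat.lt_of_succ_lt hm⟩

def Pred (m t : ℕ) (w : Equiv.Perm (Fin m)) : Prop := IncUpTo m t w ∧ AltFrom m t w


theorem strictMono_of_adjacent {N : ℕ} {β : Type*} [Preorder β] {f : Fin N → β}
    (h : ∀ j : ℕ, ∀ hj : j + 1 < N, f ⟨j, Nat.lt_of_succ_lt hj⟩ < f ⟨j + 1, hj⟩) :
    StrictMono f := by
  have main : ∀ d : ℕ, ∀ (a : ℕ) (h1 : a + d + 1 < N),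
      f ⟨a, by omega⟩ < f ⟨a + d + 1, h1⟩ := by
    intro d
    induction d with
    | zero => intro a h1; exact h a h1
    | succ d ih =>
      intro a h1
      exact lt_trans (ih a (by omega)) (h (a + d + 1) (by omega))
  intro a b hab
  have hb : b = ⟨(a : ℕ) + ((b : ℕ) - (a : ℕ) - 1) + 1, by omega⟩ := Fin.ext (by simp; omega)
  rw [hb]
  exact main ((b : ℕ) - (a : ℕ) - 1) a (by omega)

section Build

variable {m t : ℕ}

theorem compl_card {S : Finset (Fin m)} (hS : S.card = t) : Sᶜ.card = m - t := by
  rw [Finset.card_compl, hS, Fintype.card_fin]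

noncomputable def buildFun (S : Finset (Fin m)) (hS : S.card = t)
    (τ : Equiv.Perm (Fin (m - t))) : Fin m → Fin m := fun i =>
  if h : (i : ℕ) < t then S.orderEmbOfFin hS ⟨i, h⟩
  else Sᶜ.orderEmbOfFin (compl_card hS) (τ ⟨(i : ℕ) - t, by have := i.isLt; omega⟩)

theorem buildFun_apply_lt (S : Finset (Fin m)) (hS : S.card = t)
    (τ : Equiv.Perm (Fin (m - t))) (i : Fin m) (hi : (i : ℕ) < t) :
    buildFun S hS τ i = S.orderEmbOfFin hS ⟨i, hi⟩ := dif_pos hi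

theorem buildFun_apply_ge (S : Finset (Fin m)) (hS : S.card = t)
    (τ : Equiv.Perm (Fin (m - t))) (i : Fin m) (hi : ¬ ((i : ℕ) < t)) :
    buildFun S hS τ i
      = Sᶜ.orderEmbOfFin (compl_card hS) (τ ⟨(i : ℕ) - t, by have := i.isLt; omega⟩) :=
  dif_neg hi

theorem buildFun_injective (S : Finset (Fin m)) (hS : S.card = t)
    (τ : Equiv.Perm (Fin (m - t))) : Function.Injective (buildFun S hS τ) := by
  intro i j hij
  by_cases hi : (i : ℕ) < t <;> by_cases hj : (j : ℕ) < t
  · rw [buildFun_apply_lt S hS τ i hi, buildFun_apply_lt S hS τ j hj] at hij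
    have h2 := congrArg Fin.val ((S.orderEmbOfFin hS).injective hij)
    exact Fin.ext h2
  · rw [buildFun_apply_lt S hS τ i hi, buildFun_apply_ge S hS τ j hj] at hij
    exfalso
    have h1 := Finset.orderEmbOfFin_mem S hS ⟨i, hi⟩
    have h2 := Finset.orderEmbOfFin_mem Sᶜ (compl_card hS)
      (τ ⟨(j : ℕ) - t, by have := j.isLt; omega⟩)
    rw [← hij] at h2
    exact (Finset.mem_compl.mp h2) h1
  · rw [buildFun_apply_ge S hS τ i hi, buildFun_apply_lt S hS τ j hj] at hij
    exfalso
    have h1 := Finset.orderEmbOfFin_mem S hS ⟨j, hj⟩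
    have h2 := Finset.orderEmbOfFin_mem Sᶜ (compl_card hS)
      (τ ⟨(i : ℕ) - t, by have := i.isLt; omega⟩)
    rw [hij] at h2
    exact (Finset.mem_compl.mp h2) h1
  · rw [buildFun_apply_ge S hS τ i hi, buildFun_apply_ge S hS τ j hj] at hij
    have h2 := τ.injective ((Sᶜ.orderEmbOfFin (compl_card hS)).injective hij)
    have h3 := congrArg Fin.val h2
    simp only at h3
    have hI := i.isLt
    have hJ := j.isLt
    exact Fin.ext (by omega)

noncomputable def buildPerm (S : Finset (Fin m)) (hS : S.card = t)
    (τ : Equiv.Perm (Fin (m - t))) : Equiv.Perm (Fin m) :=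
  Equiv.ofBijective _ (Finite.injective_iff_bijective.mp (buildFun_injective S hS τ))

theorem buildPerm_apply (S : Finset (Fin m)) (hS : S.card = t)
    (τ : Equiv.Perm (Fin (m - t))) (i : Fin m) :
    buildPerm S hS τ i = buildFun S hS τ i := rfl

theorem buildPerm_apply_add (S : Finset (Fin m)) (hS : S.card = t)
    (τ : Equiv.Perm (Fin (m - t))) (a : ℕ) (h1 : t + a < m) (h2 : a < m - t) :
    buildPerm S hS τ ⟨t + a, h1⟩ = Sᶜ.orderEmbOfFin (compl_card hS) (τ ⟨a, h2⟩) := by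
  rw [buildPerm_apply, buildFun_apply_ge S hS τ _ (by simp)]
  congr 2
  simp

theorem buildFun_mem_iff (S : Finset (Fin m)) (hS : S.card = t)
    (τ : Equiv.Perm (Fin (m - t))) (i : Fin m) :
    buildFun S hS τ i ∈ S ↔ (i : ℕ) < t := by
  constructor
  · intro hmem
    by_contra hi
    rw [buildFun_apply_ge S hS τ i hi] at hmem
    have h2 := Finset.orderEmbOfFin_mem Sᶜ (compl_card hS)
      (τ ⟨(i : ℕ) - t, by have := i.isLt; omega⟩)
    exact (Finset.mem_compl.mp h2) hmem
  · intro hi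
    rw [buildFun_apply_lt S hS τ i hi]
    exact Finset.orderEmbOfFin_mem S hS ⟨i, hi⟩

theorem pred_buildPerm (ht : t ≤ m) (ht2 : t % 2 = 0) (S : Finset (Fin m)) (hS : S.card = t)
    (τ : Equiv.Perm (Fin (m - t))) (hτ : IsAlternating (m - t) τ) :
    Pred m t (buildPerm S hS τ) := by
  constructor
  · intro j hjt hm
    rw [buildPerm_apply, buildPerm_apply,
      buildFun_apply_lt S hS τ _ (show j < t by omega),
      buildFun_apply_lt S hS τ _ (show j + 1 < t from hjt)]
    exact (S.orderEmbOfFin hS).strictMono (by simp [Fin.mk_lt_mk])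
  · intro j hjt hm
    obtain ⟨a, rfl⟩ : ∃ a, j = t + a := ⟨j - t, by omega⟩
    have e1 := buildPerm_apply_add S hS τ a (by omega) (by omega)
    have e2 := buildPerm_apply_add S hS τ (a + 1) (by omega) (by omega)
    have hτ' := hτ a (show a + 1 < m - t by omega)
    have hpar : (t + a) % 2 = a % 2 := by omega
    rw [hpar]
    have e3 : buildPerm S hS τ ⟨t + a + 1, hm⟩
        = Sᶜ.orderEmbOfFin (compl_card hS) (τ ⟨a + 1, by omega⟩) :=
      buildPerm_apply_add S hS τ (a + 1) (by omega) (by omega)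
    split_ifs at hτ' ⊢ with hpar2
    · rw [e1, e3]
      exact (Sᶜ.orderEmbOfFin (compl_card hS)).strictMono hτ'
    · rw [e1, e3]
      exact (Sᶜ.orderEmbOfFin (compl_card hS)).strictMono hτ'

end Build

theorem card_pred (m t : ℕ) (ht : t ≤ m) (ht2 : t % 2 = 0) :
    Nat.card {w : Equiv.Perm (Fin m) // Pred m t w} =
      m.choose t * altCount (m - t) := by
  classical
  set F : ({S : Finset (Fin m) // S.card = t} ×
      {τ : Equiv.Perm (Fin (m - t)) // IsAlternating (m - t) τ}) →
      {w : Equiv.Perm (Fin m) // Pred m t w} :=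
    fun p => ⟨buildPerm p.1.1 p.1.2 p.2.1, pred_buildPerm ht ht2 p.1.1 p.1.2 p.2.1 p.2.2⟩
    with hF
  have hFbij : Function.Bijective F := by
    constructor
    · rintro ⟨⟨S, hS⟩, ⟨τ, hτ⟩⟩ ⟨⟨S', hS'⟩, ⟨τ', hτ'⟩⟩ h
      rw [hF, Subtype.mk.injEq] at h
      have hSS : S = S' := by
        ext v
        have h1 := buildFun_mem_iff S hS τ ((buildPerm S hS τ).symm v)
        have h2 := buildFun_mem_iff S' hS' τ' ((buildPerm S' hS' τ').symm v)
        rw [← buildPerm_apply, Equiv.apply_symm_apply] at h1 h2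
        rw [h1, h2, h]
      subst hSS
      have hττ : τ = τ' := by
        apply Equiv.ext
        intro a
        have e1 := buildPerm_apply_add S hS τ (a : ℕ) (by have := a.isLt; omega) a.isLt
        have e2 := buildPerm_apply_add S hS' τ' (a : ℕ) (by have := a.isLt; omega) a.isLt
        rw [h] at e1
        have e3 : Sᶜ.orderEmbOfFin (compl_card hS) (τ ⟨(a : ℕ), a.isLt⟩)
            = Sᶜ.orderEmbOfFin (compl_card hS') (τ' ⟨(a : ℕ), a.isLt⟩) := by
          rw [← e1, ← e2]
        have e4 := (Sᶜ.orderEmbOfFin (compl_card hS)).injective e3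
        simpa using e4
      subst hττ
      simp
    · rintro ⟨w, hw⟩
      -- construct S
      have hwinj : Function.Injective (fun i : Fin t => w ⟨(i : ℕ), by omega⟩) := by
        intro i j hij
        have := congrArg Fin.val (w.injective hij)
        simp only at this
        exact Fin.ext this
      set S : Finset (Fin m) := Finset.image (fun i : Fin t => w ⟨(i : ℕ), by omega⟩)
        Finset.univ with hSdef
      have hS : S.card = t := by
        rw [hSdef, Finset.card_image_of_injective _ hwinj, Finset.card_univ, Fintype.card_fin]
      have hmemc : ∀ a : Fin (m - t), w ⟨t + (a : ℕ), by have := a.isLt; omega⟩ ∈ Sᶜ := by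
        intro a
        rw [Finset.mem_compl, hSdef]
        intro hmem
        obtain ⟨i, _, hEq⟩ := Finset.mem_image.mp hmem
        have := congrArg Fin.val (w.injective hEq)
        simp only at this
        have := i.isLt
        omega
      set g : Fin (m - t) → Fin (m - t) := fun a =>
        (Sᶜ.orderIsoOfFin (compl_card hS)).symm
          ⟨w ⟨t + (a : ℕ), by have := a.isLt; omega⟩, hmemc a⟩ with hgdef
      have hginj : Function.Injective g := by
        intro a b hab
        rw [hgdef] at hab
        have h1 := congrArg (fun z => ((Sᶜ.orderIsoOfFin (compl_card hS)) z : Fin m)) hab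
        simp only [OrderIso.apply_symm_apply] at h1
        have := congrArg Fin.val (w.injective h1)
        simp only at this
        exact Fin.ext (by omega)
      set τ : Equiv.Perm (Fin (m - t)) :=
        Equiv.ofBijective g (Finite.injective_iff_bijective.mp hginj) with hτdef
      have hτapp : ∀ a : Fin (m - t),
          (Sᶜ.orderEmbOfFin (compl_card hS)) (τ a)
            = w ⟨t + (a : ℕ), by have := a.isLt; omega⟩ := by
        intro a
        have : τ a = g a := rfl
        rw [this, hgdef]
        rw [← Finset.coe_orderIsoOfFin_apply, OrderIso.apply_symm_apply]
      -- the built perm equals w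
      have hEq : buildPerm S hS τ = w := by
        apply Equiv.ext
        intro i
        rw [buildPerm_apply]
        by_cases hi : (i : ℕ) < t
        · rw [buildFun_apply_lt S hS τ i hi]
          have hmono : StrictMono (fun i : Fin t => w ⟨(i : ℕ), by omega⟩) := by
            apply strictMono_of_adjacent
            intro j hj
            exact hw.1 j hj (by omega)
          have huniq := Finset.orderEmbOfFin_unique hS
            (f := fun i : Fin t => w ⟨(i : ℕ), by omega⟩)
            (fun x => Finset.mem_image_of_mem _ (Finset.mem_univ x)) hmono
          rw [← huniq]
        · rw [buildFun_apply_ge S hS τ i hi]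
          have e5 := hτapp ⟨(i : ℕ) - t, by have := i.isLt; omega⟩
          rw [e5]
          exact congrArg w (Fin.ext (by simp only [Fin.val_mk]; omega))
      -- τ is alternating
      have hτalt : IsAlternating (m - t) τ := by
        intro a ha
        have h1 := hw.2 (t + a) (by omega) (by omega)
        have hpar : (t + a) % 2 = a % 2 := by omega
        rw [hpar] at h1
        have l1 : ∀ (a' b' : ℕ) (h' : a' < m - t) (h'' : b' < m - t),
            (τ ⟨a', h'⟩ < τ ⟨b', h''⟩ ↔
              w ⟨t + a', by omega⟩ < w ⟨t + b', by omega⟩) := by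
          intro a' b' h' h''
          rw [← (Sᶜ.orderEmbOfFin (compl_card hS)).lt_iff_lt,
            hτapp ⟨a', h'⟩, hτapp ⟨b', h''⟩]
        split_ifs at h1 ⊢ with hpar2
        · rw [l1 a (a + 1) (by omega) (by omega)]
          exact h1
        · rw [l1 (a + 1) a (by omega) (by omega)]
          exact h1
      refine ⟨⟨⟨S, hS⟩, ⟨τ, hτalt⟩⟩, ?_⟩
      rw [hF]
      exact Subtype.ext hEq
  have hcard := Nat.card_eq_of_bijective F hFbij
  rw [← hcard, Nat.card_prod]
  congr 1
  rw [Nat.card_eq_fintype_card]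
  rw [Fintype.card_finset_len, Fintype.card_fin]

theorem pred_up {n k : ℕ} {w : Equiv.Perm (Fin (2 * n))} (hk : k < n)
    (hw : Pred (2 * n) (2 * k) w)
    (hj : k = 0 ∨ ∀ h2 : 2 * k < 2 * n, w ⟨2 * k - 1, by omega⟩ < w ⟨2 * k, h2⟩) :
    Pred (2 * n) (2 * (k + 1)) w := by
  obtain ⟨hinc, halt⟩ := hw
  constructor
  · intro j hjt hm
    by_cases h1 : j + 1 < 2 * k
    · exact hinc j h1 hm
    by_cases h2 : j + 1 = 2 * k
    · rcases hj with rfl | hj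
      · omega
      · have hlt := hj (by omega)
        have hj' : j = 2 * k - 1 := by omega
        simp only [hj']
        simp only [show 2 * k - 1 + 1 = 2 * k from by omega]
        exact hlt
    · have hj' : j = 2 * k := by omega
      have := halt j (by omega) hm
      rwa [if_pos (by omega)] at this
  · intro j hjt hm
    exact halt j (by omega) hm

theorem pred_down {n k : ℕ} {w : Equiv.Perm (Fin (2 * n))} (hk1 : 1 ≤ k) (hk2 : k ≤ n)
    (hw : Pred (2 * n) (2 * k) w)
    (hjun : ∀ h2 : 2 * k < 2 * n, w ⟨2 * k, h2⟩ < w ⟨2 * k - 1, by omega⟩) :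
    Pred (2 * n) (2 * (k - 1)) w := by
  obtain ⟨hinc, halt⟩ := hw
  constructor
  · intro j hjt hm
    exact hinc j (by omega) hm
  · intro j hjt hm
    by_cases h1 : 2 * k ≤ j
    · exact halt j h1 hm
    by_cases h2 : j = 2 * k - 2
    · rw [if_pos (by omega)]
      exact hinc j (by omega) hm
    · -- j = 2 * k - 1, odd
      have hj' : j = 2 * k - 1 := by omega
      rw [if_neg (by omega)]
      have hlt := hjun (by omega)
      simp only [hj']
      simp only [show 2 * k - 1 + 1 = 2 * k from by omega]
      exact hlt

theorem pred_not_up {n k : ℕ} {w : Equiv.Perm (Fin (2 * n))} (hk : k + 1 < n)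
    (hw : Pred (2 * n) (2 * k) w) (h2 : 2 * (k + 1) < 2 * n) :
    ¬ (w ⟨2 * (k + 1) - 1, by omega⟩ < w ⟨2 * (k + 1), h2⟩) := by
  have := hw.2 (2 * k + 1) (by omega) (by omega)
  rw [if_neg (by omega)] at this
  intro hcon
  have h1 : (2 * (k + 1) - 1) = 2 * k + 1 := by omega
  have h2' : (2 * (k + 1)) = 2 * k + 1 + 1 := by omega
  simp only [h1, h2'] at hcon
  exact absurd hcon (asymm this)

theorem key_sum (n : ℕ) (hn : 1 ≤ n) :
    ∑ k ∈ Finset.range (n + 1),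
      (-1 : ℤ) ^ k * Nat.card {w : Equiv.Perm (Fin (2 * n)) // Pred (2 * n) (2 * k) w} = 0 := by
  classical
  set s : Finset (ℕ × Equiv.Perm (Fin (2 * n))) :=
    (Finset.range (n + 1) ×ˢ Finset.univ).filter (fun a => Pred (2 * n) (2 * a.1) a.2) with hs
  have hmem : ∀ a : ℕ × Equiv.Perm (Fin (2 * n)),
      a ∈ s ↔ a.1 ≤ n ∧ Pred (2 * n) (2 * a.1) a.2 := by
    intro a
    simp [hs, Finset.mem_filter, Finset.mem_product, Nat.lt_succ_iff]
  have hsum : ∑ a ∈ s, (-1 : ℤ) ^ a.1 = 0 := by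
    set g : (ℕ × Equiv.Perm (Fin (2 * n))) → (ℕ × Equiv.Perm (Fin (2 * n))) := fun a =>
      if a.1 < n ∧ (a.1 = 0 ∨ ∀ h2 : 2 * a.1 < 2 * n,
          a.2 ⟨2 * a.1 - 1, by omega⟩ < a.2 ⟨2 * a.1, h2⟩)
      then (a.1 + 1, a.2) else (a.1 - 1, a.2) with hg
    have key : ∀ a ∈ s, (g a ∈ s) ∧ ((-1 : ℤ) ^ a.1 + (-1 : ℤ) ^ (g a).1 = 0)
        ∧ g a ≠ a ∧ g (g a) = a := by
      rintro ⟨k, w⟩ ha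
      rw [hmem] at ha
      obtain ⟨hkn, hp⟩ := ha
      by_cases hup : k < n ∧ (k = 0 ∨ ∀ h2 : 2 * k < 2 * n,
          w ⟨2 * k - 1, by omega⟩ < w ⟨2 * k, h2⟩)
      · have hga : g (k, w) = (k + 1, w) := by rw [hg]; exact if_pos hup
        have hmem2 : (k + 1, w) ∈ s := by
          rw [hmem]
          exact ⟨by omega, pred_up hup.1 hp hup.2⟩
        refine ⟨hga ▸ hmem2, ?_, ?_, ?_⟩
        · rw [hga]; simp [pow_succ]
        · rw [hga]; intro hcon; injection hcon with h1 _; omega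
        · rw [hga, hg]
          beta_reduce
          rw [if_neg ?_]
          · simp
          · rintro ⟨hlt, hor⟩
            rcases hor with h0 | hjun
            · omega
            · exact pred_not_up (by omega) hp (by omega) (hjun (by omega))
      · -- down case
        have hk1 : 1 ≤ k := by
          by_contra hcon
          exact hup ⟨by omega, Or.inl (by omega)⟩
        have hga : g (k, w) = (k - 1, w) := by rw [hg]; exact if_neg hup
        have hjun : ∀ h2 : 2 * k < 2 * n, w ⟨2 * k, h2⟩ < w ⟨2 * k - 1, by omega⟩ := by
          intro h2
          have hkln : k < n := by omega
          have hnotlt : ¬ (w ⟨2 * k - 1, by omega⟩ < w ⟨2 * k, h2⟩) := by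
            intro hlt
            exact hup ⟨hkln, Or.inr (fun _ => hlt)⟩
          have hne : w ⟨2 * k, h2⟩ ≠ w ⟨2 * k - 1, by omega⟩ := by
            intro hEq
            have := w.injective hEq
            rw [Fin.mk.injEq] at this
            omega
          exact lt_of_le_of_ne (le_of_not_gt hnotlt) (Ne.symm (fun h => hne h.symm))
        have hmem2 : (k - 1, w) ∈ s := by
          rw [hmem]
          exact ⟨by omega, pred_down hk1 hkn hp hjun⟩
        refine ⟨hga ▸ hmem2, ?_, ?_, ?_⟩
        · rw [hga]
          have : k = (k - 1) + 1 := by omega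
          rw [this]
          simp [pow_succ]
        · rw [hga]; intro hcon; injection hcon with h1 _; omega
        · rw [hga, hg]
          beta_reduce
          rw [if_pos ?_]
          · simp only []
            rw [Prod.mk.injEq]
            exact ⟨by omega, rfl⟩
          · refine ⟨by omega, ?_⟩
            by_cases hk2 : k = 1
            · exact Or.inl (by omega)
            · refine Or.inr (fun h2 => ?_)
              have h5 := hp.1 (2 * (k - 1) - 1) (by omega) (by omega)
              simp only [show 2 * (k - 1) - 1 + 1 = 2 * (k - 1) from by omega] at h5
              exact h5
    refine Finset.sum_involution (fun a _ => g a) ?_ ?_ ?_ ?_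
    · intro a ha; exact (key a ha).2.1
    · intro a ha _; exact (key a ha).2.2.1
    · intro a ha; exact (key a ha).1
    · intro a ha; exact (key a ha).2.2.2
  rw [← hsum, hs, Finset.sum_filter, Finset.sum_product]
  refine Finset.sum_congr rfl fun k hk => ?_
  rw [← Finset.sum_filter]
  show _ = ∑ _a ∈ Finset.univ.filter (fun w => Pred (2 * n) (2 * k) w), (-1 : ℤ) ^ k
  rw [Finset.sum_const, Nat.card_eq_fintype_card, Fintype.card_subtype, nsmul_eq_mul]
  ring

theorem key_identity (n : ℕ) (hn : 1 ≤ n) :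
    ∑ k ∈ Finset.range (n + 1),
      (-1 : ℤ) ^ k * ((2 * n).choose (2 * k)) * altCount (2 * n - 2 * k) = 0 := by
  have h := key_sum n hn
  rw [← h]
  refine Finset.sum_congr rfl fun k hk => ?_
  rw [Finset.mem_range] at hk
  rw [card_pred (2 * n) (2 * k) (by omega) (by omega)]
  push_cast
  ring

theorem key_identity' (M : ℕ) (hM : 1 ≤ M) :
    ∑ k ∈ Finset.range (M + 1),
      (-1 : ℤ) ^ k * ((2 * M).choose (2 * k)) * altCount (2 * k) = 0 := by
  have h := key_identity M hM
  rw [← Finset.sum_range_reflect] at h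
  have h2 : ∀ k ∈ Finset.range (M + 1),
      (-1 : ℤ) ^ (M + 1 - 1 - k) * ((2 * M).choose (2 * (M + 1 - 1 - k)))
        * altCount (2 * M - 2 * (M + 1 - 1 - k))
      = (-1 : ℤ) ^ M * ((-1 : ℤ) ^ k * ((2 * M).choose (2 * k)) * altCount (2 * k)) := by
    intro k hk
    rw [Finset.mem_range] at hk
    have hd : 2 * M - 2 * (M + 1 - 1 - k) = 2 * k := by omega
    have hc : (2 * M).choose (2 * (M + 1 - 1 - k)) = (2 * M).choose (2 * k) := by
      have h3 : 2 * (M + 1 - 1 - k) = 2 * M - 2 * k := by omega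
      rw [h3, Nat.choose_symm (by omega)]
    have hsq : ((-1 : ℤ) ^ k) * ((-1 : ℤ) ^ k) = 1 := by
      rw [← mul_pow]; simp
    have hs : (-1 : ℤ) ^ (M + 1 - 1 - k) = (-1 : ℤ) ^ M * (-1 : ℤ) ^ k := by
      have h4 : (-1 : ℤ) ^ (M + 1 - 1 - k) * (-1) ^ k = (-1) ^ M := by
        rw [← pow_add]; congr 1; omega
      calc (-1 : ℤ) ^ (M + 1 - 1 - k)
          = (-1 : ℤ) ^ (M + 1 - 1 - k) * (((-1 : ℤ) ^ k) * ((-1 : ℤ) ^ k)) := by rw [hsq, mul_one]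
        _ = (-1 : ℤ) ^ M * (-1 : ℤ) ^ k := by rw [← mul_assoc, h4]
    rw [hd, hc, hs]; ring
  rw [Finset.sum_congr rfl h2, ← Finset.mul_sum] at h
  rcases mul_eq_zero.1 h with h' | h'
  · exact absurd h' (by positivity)
  · exact h'


open Finset in
noncomputable def cc : ℕ → ℂ := fun j =>
  if j % 2 = 0 then (-1 : ℂ) ^ (j / 2) * (altCount j) / (j.factorial) else 0

noncomputable def hh : ℕ → ℂ := fun j =>
  if j % 2 = 0 then ((j.factorial : ℂ))⁻¹ else 0

theorem altCount_zero : altCount 0 = 1 := by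
  rw [altCount]
  haveI : Unique {τ : Equiv.Perm (Fin 0) // IsAlternating 0 τ} := by
    refine ⟨⟨⟨1, fun j hj => by omega⟩⟩, fun a => Subtype.ext ?_⟩
    exact Equiv.ext fun i => i.elim0
  exact Nat.card_unique

theorem altCount_le (j : ℕ) : altCount j ≤ j.factorial := by
  rw [altCount]
  calc Nat.card {τ : Equiv.Perm (Fin j) // IsAlternating j τ}
      ≤ Nat.card (Equiv.Perm (Fin j)) := Finite.card_subtype_le _
    _ = j.factorial := by
        rw [Nat.card_eq_fintype_card, Fintype.card_perm, Fintype.card_fin]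

theorem norm_cc_le (j : ℕ) : ‖cc j‖ ≤ 1 := by
  rw [cc]
  split_ifs
  · rw [norm_div, norm_mul, norm_pow, norm_neg, norm_one, one_pow, one_mul,
      Complex.norm_natCast, Complex.norm_natCast]
    apply div_le_one_of_le₀
    · exact_mod_cast altCount_le j
    · positivity
  · simp

theorem summable_norm_cc {z : ℂ} (hz : ‖z‖ < 1) : Summable fun n => ‖cc n * z ^ n‖ := by
  apply Summable.of_nonneg_of_le (fun n => norm_nonneg _) (fun n => ?_)
    (summable_geometric_of_lt_one (norm_nonneg z) hz)
  rw [norm_mul, norm_pow]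
  calc ‖cc n‖ * ‖z‖ ^ n ≤ 1 * ‖z‖ ^ n := by gcongr; exact norm_cc_le n
    _ = ‖z‖ ^ n := one_mul _

theorem summable_norm_hh (z : ℂ) : Summable fun n => ‖hh n * z ^ n‖ := by
  apply Summable.of_nonneg_of_le (fun n => norm_nonneg _) (fun n => ?_)
    (Real.summable_pow_div_factorial ‖z‖)
  rw [norm_mul, norm_pow]
  have h1 : ‖hh n‖ ≤ ((n.factorial : ℝ))⁻¹ := by
    rw [hh]
    split_ifs
    · rw [norm_inv, Complex.norm_natCast]
    · simp
  calc ‖hh n‖ * ‖z‖ ^ n ≤ ((n.factorial : ℝ))⁻¹ * ‖z‖ ^ n := by gcongr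
    _ = ‖z‖ ^ n / n.factorial := by ring

theorem hasSum_hh (z : ℂ) : HasSum (fun n => hh n * z ^ n) (Complex.cosh z) := by
  have h0 := Complex.hasSum_cos (z * Complex.I)
  rw [Complex.cos_mul_I] at h0
  have h1 : ∀ n : ℕ, (-1 : ℂ) ^ n * (z * Complex.I) ^ (2 * n) / ((2 * n).factorial)
      = hh (2 * n) * z ^ (2 * n) := by
    intro n
    have hsq : ((-1 : ℂ)) ^ n * ((-1 : ℂ)) ^ n = 1 := by rw [← mul_pow]; simp
    rw [hh, if_pos (by omega)]
    have hI : Complex.I ^ (2 * n) = (-1 : ℂ) ^ n := by rw [pow_mul, Complex.I_sq]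
    rw [mul_pow, hI,
      show (-1 : ℂ) ^ n * (z ^ (2 * n) * (-1 : ℂ) ^ n) = ((-1 : ℂ) ^ n * (-1 : ℂ) ^ n) * z ^ (2 * n) from by ring,
      hsq, one_mul, div_eq_inv_mul]
  have h2 : HasSum ((fun n => hh n * z ^ n) ∘ (fun n => 2 * n)) (Complex.cosh z) := by
    have he : ((fun n => hh n * z ^ n) ∘ (fun n => 2 * n))
        = fun n => (-1 : ℂ) ^ n * (z * Complex.I) ^ (2 * n) / ((2 * n).factorial) :=
      funext fun n => (h1 n).symm
    rw [he]
    exact h0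
  refine (Function.Injective.hasSum_iff (fun a b h => by omega) ?_).mp h2
  intro x hx
  have hodd : x % 2 = 1 := by
    by_contra hcon
    exact hx ⟨x / 2, by show 2 * (x / 2) = x; omega⟩
  rw [hh, if_neg (by omega), zero_mul]

theorem key_sum_complex (M : ℕ) (hM : 1 ≤ M) :
    ∑ k ∈ Finset.range (M + 1), cc (2 * k) * hh (2 * M - 2 * k) = 0 := by
  have hz2 : (∑ k ∈ Finset.range (M + 1),
      ((-1 : ℤ) ^ k * ((2 * M).choose (2 * k)) * altCount (2 * k) : ℤ) : ℂ) = 0 := by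
    exact_mod_cast key_identity' M hM
  push_cast at hz2
  have goal_eq : ∀ k ∈ Finset.range (M + 1), cc (2 * k) * hh (2 * M - 2 * k)
      = ((-1 : ℂ) ^ k * ((2 * M).choose (2 * k)) * altCount (2 * k)) / ((2 * M).factorial) := by
    intro k hk
    rw [Finset.mem_range] at hk
    rw [cc, hh, if_pos (by omega), if_pos (by omega)]
    rw [Nat.mul_div_cancel_left k (by norm_num)]
    have hfac : ((2 * M).choose (2 * k) : ℂ) * (2 * k).factorial * (2 * M - 2 * k).factorial
        = (2 * M).factorial := by
      exact_mod_cast Nat.choose_mul_factorial_mul_factorial (show 2 * k ≤ 2 * M by omega)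
    have f1 : ((2 * k).factorial : ℂ) ≠ 0 := Nat.cast_ne_zero.mpr (Nat.factorial_ne_zero _)
    have f2 : ((2 * M - 2 * k).factorial : ℂ) ≠ 0 := Nat.cast_ne_zero.mpr (Nat.factorial_ne_zero _)
    have f3 : ((2 * M).factorial : ℂ) ≠ 0 := Nat.cast_ne_zero.mpr (Nat.factorial_ne_zero _)
    field_simp
    linear_combination (-(altCount (2 * k) : ℂ)) * hfac
  rw [Finset.sum_congr rfl goal_eq, ← Finset.sum_div]
  rw [hz2]
  simp

theorem inner_antidiag (z : ℂ) (N : ℕ) :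
    ∑ kl ∈ Finset.HasAntidiagonal.antidiagonal N, (cc kl.1 * z ^ kl.1) * (hh kl.2 * z ^ kl.2)
      = (if N = 0 then 1 else 0) := by
  by_cases hN0 : N = 0
  · subst hN0
    rw [if_pos rfl]
    rw [Finset.Nat.antidiagonal_zero, Finset.sum_singleton]
    simp [cc, hh, altCount_zero]
  rw [if_neg hN0]
  by_cases hpar : N % 2 = 1
  · apply Finset.sum_eq_zero
    rintro ⟨i, j⟩ hkl
    rw [Finset.HasAntidiagonal.mem_antidiagonal] at hkl
    simp only
    by_cases hi : i % 2 = 0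
    · have : j % 2 = 1 := by omega
      rw [hh, if_neg (by omega)]
      ring
    · rw [cc, if_neg hi]
      ring
  · -- N = 2 M with M ≥ 1
    obtain ⟨M, rfl⟩ : ∃ M, N = 2 * M := ⟨N / 2, by omega⟩
    have hM : 1 ≤ M := by omega
    rw [Finset.Nat.sum_antidiagonal_eq_sum_range_succ_mk]
    have hsub : (Finset.range (M + 1)).image (fun k => 2 * k) ⊆ Finset.range (2 * M + 1) := by
      intro i hi
      obtain ⟨k, hk, rfl⟩ := Finset.mem_image.mp hi
      rw [Finset.mem_range] at hk ⊢
      omega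
    have hvan : ∀ i ∈ Finset.range (2 * M + 1),
        i ∉ (Finset.range (M + 1)).image (fun k => 2 * k) →
        (cc i * z ^ i) * (hh (2 * M - i) * z ^ (2 * M - i)) = 0 := by
      intro i hi hnot
      rw [Finset.mem_range] at hi
      have : i % 2 = 1 := by
        by_contra hcon
        exact hnot (Finset.mem_image.mpr ⟨i / 2, Finset.mem_range.mpr (by omega), by omega⟩)
      rw [cc, if_neg (by omega)]
      ring
    rw [← Finset.sum_subset hsub hvan]
    rw [Finset.sum_image (fun a _ b _ h => by omega)]
    have hterm : ∀ k ∈ Finset.range (M + 1),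
        (cc (2 * k) * z ^ (2 * k)) * (hh (2 * M - 2 * k) * z ^ (2 * M - 2 * k))
        = (cc (2 * k) * hh (2 * M - 2 * k)) * z ^ (2 * M) := by
      intro k hk
      rw [Finset.mem_range] at hk
      have hzz : z ^ (2 * k) * z ^ (2 * M - 2 * k) = z ^ (2 * M) := by
        rw [← pow_add]; congr 1; omega
      rw [← hzz]; ring
    rw [Finset.sum_congr rfl hterm, ← Finset.sum_mul, key_sum_complex M hM, zero_mul]

theorem cosh_ne_zero_of_norm_lt {z : ℂ} (hz : ‖z‖ < Real.pi / 2) : Complex.cosh z ≠ 0 := by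
  intro h
  rw [← Complex.cos_mul_I] at h
  obtain ⟨k, hk⟩ := Complex.cos_eq_zero_iff.mp h
  have h1 : ‖z * Complex.I‖ = ‖z‖ := by simp
  rw [hk] at h1
  have h3 : ((2 * (k : ℂ) + 1) * (Real.pi : ℂ) / 2)
      = (((2 * (k : ℝ) + 1) * Real.pi / 2 : ℝ) : ℂ) := by push_cast; ring
  rw [h3, Complex.norm_real, Real.norm_eq_abs] at h1
  have h4 : |(2 * (k : ℝ) + 1) * Real.pi / 2| = |2 * (k : ℝ) + 1| * (Real.pi / 2) := by
    rw [abs_div, abs_mul]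
    rw [abs_of_pos Real.pi_pos, abs_of_pos (by norm_num : (0:ℝ) < 2)]
    ring
  have h5 : (1 : ℝ) ≤ |2 * (k : ℝ) + 1| := by
    have he : (2 * (k : ℝ) + 1) = ((2 * k + 1 : ℤ) : ℝ) := by push_cast; ring
    rw [he, ← Int.cast_abs]
    exact_mod_cast Int.one_le_abs (by omega)
  rw [h4] at h1
  nlinarith [Real.pi_pos]

theorem hasSum_inv_cosh {z : ℂ} (hz : ‖z‖ < 1) :
    HasSum (fun n => cc n * z ^ n) (1 / Complex.cosh z) := by
  have hcosh : Complex.cosh z ≠ 0 := by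
    apply cosh_ne_zero_of_norm_lt
    nlinarith [Real.pi_gt_three]
  have hfn := summable_norm_cc hz
  have hgn := summable_norm_hh z
  have hf : Summable (fun n => cc n * z ^ n) := Summable.of_norm hfn
  have hprod := tsum_mul_tsum_eq_tsum_sum_antidiagonal_of_summable_norm hfn hgn
  rw [(hasSum_hh z).tsum_eq] at hprod
  have hone : ∑' N, (∑ kl ∈ Finset.HasAntidiagonal.antidiagonal N,
      (cc kl.1 * z ^ kl.1) * (hh kl.2 * z ^ kl.2)) = 1 := by
    rw [tsum_congr (inner_antidiag z)]
    exact tsum_ite_eq 0 1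
  rw [hone] at hprod
  have htsum : ∑' n, cc n * z ^ n = 1 / Complex.cosh z := by
    rw [eq_div_iff hcosh]
    exact hprod
  exact htsum ▸ hf.hasSum

noncomputable def qS : FormalMultilinearSeries ℂ ℂ ℂ := FormalMultilinearSeries.ofScalars ℂ cc

theorem hasFPS_one : HasFPowerSeriesOnBall (fun z => 1 / Complex.cosh z) qS 0 1 := by
  constructor
  · have hb : ((1 : ℝ≥0) : ℝ≥0∞) ≤ qS.radius := by
      apply FormalMultilinearSeries.le_radius_of_bound _ 1
      intro n
      show ‖FormalMultilinearSeries.ofScalars ℂ cc n‖ * _ ≤ _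
      rw [FormalMultilinearSeries.ofScalars_norm]
      simpa using norm_cc_le n
    simpa using hb
  · exact one_pos
  · intro y hy
    rw [mem_emetric_ball_zero_iff] at hy
    have hy' : ‖y‖ < 1 := by
      rw [enorm_eq_nnnorm, ← ENNReal.coe_one, ENNReal.coe_lt_coe, ← NNReal.coe_lt_coe, coe_nnnorm,
        NNReal.coe_one] at hy
      exact hy
    have hmain := hasSum_inv_cosh hy'
    have he : (fun n => qS n fun _ => y) = fun n => cc n * y ^ n := by
      funext n
      show FormalMultilinearSeries.ofScalars ℂ cc n (fun _ => y) = _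
      rw [FormalMultilinearSeries.ofScalars_apply_eq, smul_eq_mul]
    rw [he, zero_add]
    exact hmain

theorem hasFPS_r (r : ℝ≥0) (hr0 : 0 < r) (hr : (r : ℝ) < Real.pi / 2) :
    HasFPowerSeriesOnBall (fun z => 1 / Complex.cosh z) qS 0 r := by
  have hd : DifferentiableOn ℂ (fun z => 1 / Complex.cosh z) (Metric.closedBall 0 r) := by
    apply DifferentiableOn.div (differentiableOn_const 1)
      (Complex.differentiable_cosh.differentiableOn)
    intro z hz
    apply cosh_ne_zero_of_norm_lt
    rw [Metric.mem_closedBall, dist_zero_right] at hz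
    linarith
  have h2 := hd.hasFPowerSeriesOnBall hr0
  have h3 : cauchyPowerSeries (fun z => 1 / Complex.cosh z) 0 r = qS :=
    h2.hasFPowerSeriesAt.eq_formalMultilinearSeries hasFPS_one.hasFPowerSeriesAt
  rwa [h3] at h2

end AltAux


theorem stmt_18 (x : ℝ) (hx : |x| < Real.pi / 2) :
    1 / Real.cosh x =
      ∑' n : ℕ, (-1) ^ n * (altCount (2 * n) : ℝ) * x ^ (2 * n) /
        Nat.factorial (2 * n) := by
  have hpi := Real.pi_pos
  set rr : ℝ := (|x| + Real.pi / 2) / 2 with hrr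
  have habs : 0 ≤ |x| := abs_nonneg x
  have hrr0 : 0 < rr := by rw [hrr]; linarith
  have hrrlt : rr < Real.pi / 2 := by rw [hrr]; linarith
  have hxrr : |x| < rr := by rw [hrr]; linarith
  set r : ℝ≥0 := ⟨rr, le_of_lt hrr0⟩ with hr
  have h := AltAux.hasFPS_r r (by exact_mod_cast hrr0) (by exact_mod_cast hrrlt)
  have hmem : (x : ℂ) ∈ Metric.eball 0 r := by
    rw [mem_emetric_ball_zero_iff, enorm_eq_nnnorm, ENNReal.coe_lt_coe, ← NNReal.coe_lt_coe,
      coe_nnnorm, Complex.norm_real, Real.norm_eq_abs]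
    exact hxrr
  have hsum := h.hasSum hmem
  have he : (fun n => AltAux.qS n fun _ => (x : ℂ)) = fun n => AltAux.cc n * (x : ℂ) ^ n := by
    funext n
    show FormalMultilinearSeries.ofScalars ℂ AltAux.cc n (fun _ => (x : ℂ)) = _
    rw [FormalMultilinearSeries.ofScalars_apply_eq, smul_eq_mul]
  rw [he, zero_add] at hsum
  have hcr : (fun n => AltAux.cc n * (x : ℂ) ^ n) = fun n =>
      (((if n % 2 = 0 then (-1 : ℝ) ^ (n / 2) * (altCount n) * x ^ n / n.factorial else 0) : ℝ) : ℂ) := by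
    funext n
    rw [AltAux.cc]
    split_ifs with hpar
    · push_cast
      ring
    · simp
  rw [hcr] at hsum
  have hcoshx : (1 : ℂ) / Complex.cosh x = ((1 / Real.cosh x : ℝ) : ℂ) := by
    rw [Complex.ofReal_div, Complex.ofReal_cosh, Complex.ofReal_one]
  rw [hcoshx] at hsum
  have hsumR := Complex.hasSum_ofReal.mp hsum
  have hvanish : ∀ j ∉ Set.range (fun n => 2 * n),
      (if j % 2 = 0 then (-1 : ℝ) ^ (j / 2) * (altCount j) * x ^ j / j.factorial else 0) = 0 := by
    intro j hj
    rw [if_neg]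
    intro hcon
    exact hj ⟨j / 2, by show 2 * (j / 2) = j; omega⟩
  have hfinal := (Function.Injective.hasSum_iff (g := fun n => 2 * n)
    (fun a b hab => by have h2ab : 2 * a = 2 * b := hab; omega) hvanish).mpr hsumR
  have hcomp : ((fun j => (if j % 2 = 0 then (-1 : ℝ) ^ (j / 2) * (altCount j) * x ^ j / j.factorial else 0)) ∘ (fun n => 2 * n))
      = fun n => (-1 : ℝ) ^ n * (altCount (2 * n) : ℝ) * x ^ (2 * n) / Nat.factorial (2 * n) := by
    funext n
    show (if (2 * n) % 2 = 0 then (-1 : ℝ) ^ ((2 * n) / 2) * (altCount (2 * n)) * x ^ (2 * n) / (2 * n).factorial else 0) = _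
    rw [if_pos (by omega), Nat.mul_div_cancel_left n (by norm_num)]
  rw [hcomp] at hfinal
  exact hfinal.tsum_eq.symm
end
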